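/- arXiv:2401.08997 — 5 statements merged into one kernel-verified Lean document; each statement's English description precedes it below -/
import Mathlib

section
/- For every real number k and every complex number z with Im z > 0, P_k(z − 1/2) + P_k(z) = (2 + 2^{1−k}) · P_k(2z) − 2^{1−k} · P_k(4z). -/
open Complex Real

/-- P_k(z) = Σ_{n=1}^∞ n^{−k} · e^{2πinz}/(1 − e^{2πinz}), for real k and Im z > 0. -/
noncomputable def P (k : ℝ) (z : ℂ) : ℂ :=
  ∑' n : ℕ+, (n : ℂ) ^ (-(k : ℂ)) *
    (Complex.exp (2 * Real.pi * Complex.I * n * z) /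
      (1 - Complex.exp (2 * Real.pi * Complex.I * n * z)))

/-- The term of the Lambert-type series. -/
noncomputable def Lt (k : ℝ) (w : ℂ) (n : ℕ+) : ℂ :=
  (n : ℂ) ^ (-(k : ℂ)) * (w ^ (n : ℕ) / (1 - w ^ (n : ℕ)))

noncomputable def L (k : ℝ) (w : ℂ) : ℂ := ∑' n : ℕ+, Lt k w n

lemma pow_norm_lt {w : ℂ} (hw : ‖w‖ < 1) {m : ℕ} (hm : m ≠ 0) : ‖w ^ m‖ < 1 := by
  rw [norm_pow]
  exact pow_lt_one₀ (norm_nonneg w) hw hm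

lemma one_sub_pow_ne {w : ℂ} (hw : ‖w‖ < 1) {m : ℕ} (hm : m ≠ 0) : 1 - w ^ m ≠ 0 := by
  intro h
  have h1 : w ^ m = 1 := by linear_combination -h
  have h2 := pow_norm_lt hw hm
  rw [h1] at h2
  norm_num at h2

lemma one_add_pow_ne {w : ℂ} (hw : ‖w‖ < 1) {m : ℕ} (hm : m ≠ 0) : 1 + w ^ m ≠ 0 := by
  intro h
  have h1 : w ^ m = -1 := by linear_combination h
  have := pow_norm_lt hw hm
  rw [h1] at this
  norm_num at this

lemma norm_one_sub_pow {w : ℂ} (hw : ‖w‖ < 1) {m : ℕ} (hm : m ≠ 0) :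
    1 - ‖w‖ ≤ ‖1 - w ^ m‖ := by
  have h1 : ‖w ^ m‖ ≤ ‖w‖ := by
    rw [norm_pow]
    calc ‖w‖ ^ m ≤ ‖w‖ ^ 1 :=
      pow_le_pow_of_le_one (norm_nonneg w) hw.le (Nat.one_le_iff_ne_zero.2 hm)
    _ = ‖w‖ := pow_one _
  calc 1 - ‖w‖ ≤ 1 - ‖w ^ m‖ := by linarith
  _ = ‖(1:ℂ)‖ - ‖w ^ m‖ := by simp
  _ ≤ ‖1 - w ^ m‖ := norm_sub_norm_le _ _

/-- Generic summability by comparison with `n^(-k) r^n C`. -/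
lemma summable_aux (k : ℝ) {f : ℕ+ → ℂ} {r C : ℝ} (hr0 : 0 ≤ r) (hr : r < 1) (hC : 0 ≤ C)
    (hf : ∀ n : ℕ+, ‖f n‖ ≤ (n : ℝ) ^ (-k) * r ^ (n : ℕ) * C) : Summable f := by
  apply Summable.of_norm_bounded ?_ hf
  -- summability of n^{-k} r^n C over ℕ+
  set N : ℕ := ⌈-k⌉₊ with hN
  have hbase : Summable (fun n : ℕ => ((n : ℝ) ^ N * r ^ n) * C) := by
    apply Summable.mul_right
    have : ‖r‖ < 1 := by rwa [Real.norm_of_nonneg hr0]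
    exact summable_pow_mul_geometric_of_norm_lt_one N this
  have hb2 : Summable (fun n : ℕ+ => (((n : ℕ) : ℝ) ^ N * r ^ (n : ℕ)) * C) :=
    hbase.comp_injective (fun a b h => by exact_mod_cast h)
  apply Summable.of_nonneg_of_le (fun n => ?_) (fun n => ?_) hb2
  · positivity
  · have h1 : (1 : ℝ) ≤ (n : ℝ) := by exact_mod_cast n.one_le
    have h2 : (n : ℝ) ^ (-k) ≤ (n : ℝ) ^ N := by
      rw [← Real.rpow_natCast (n : ℝ) N]
      exact Real.rpow_le_rpow_of_exponent_le h1 (Nat.le_ceil (-k) |>.trans (by rw [hN]))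
    have h3 : (0:ℝ) ≤ r ^ (n : ℕ) * C := by positivity
    calc (n : ℝ) ^ (-k) * r ^ (n:ℕ) * C = (n : ℝ) ^ (-k) * (r ^ (n:ℕ) * C) := by ring
    _ ≤ (n : ℝ) ^ N * (r ^ (n:ℕ) * C) := mul_le_mul_of_nonneg_right h2 h3
    _ = (n : ℝ) ^ N * r ^ (n:ℕ) * C := by ring

lemma norm_coef (k : ℝ) (n : ℕ+) : ‖(n : ℂ) ^ (-(k:ℂ))‖ = (n : ℝ) ^ (-k) := by
  have hn : (0:ℝ) < (n:ℕ) := by exact_mod_cast n.pos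
  have : ((n : ℕ+) : ℂ) = (((n:ℕ):ℝ) : ℂ) := by push_cast; ring
  rw [this, Complex.norm_cpow_eq_rpow_re_of_pos hn]
  norm_num

lemma Lt_norm_le (k : ℝ) {w : ℂ} (hw : ‖w‖ < 1) (n : ℕ+) :
    ‖Lt k w n‖ ≤ (n : ℝ) ^ (-k) * ‖w‖ ^ (n : ℕ) * (1 - ‖w‖)⁻¹ := by
  have hpos : 0 < 1 - ‖w‖ := by linarith
  have hne : (n:ℕ) ≠ 0 := n.pos.ne'
  rw [Lt, norm_mul, norm_coef, norm_div, norm_pow, mul_assoc]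
  apply mul_le_mul_of_nonneg_left ?_ (Real.rpow_nonneg (by positivity) _)
  rw [div_eq_mul_inv]
  apply mul_le_mul_of_nonneg_left ?_ (by positivity)
  exact inv_anti₀ hpos (norm_one_sub_pow hw hne)

lemma L_summable (k : ℝ) {w : ℂ} (hw : ‖w‖ < 1) : Summable (Lt k w) :=
  summable_aux k (norm_nonneg w) hw (inv_nonneg.2 (by linarith)) (Lt_norm_le k hw)


/-- even-part auxiliary term -/
noncomputable def U (k : ℝ) (w : ℂ) (n : ℕ+) : ℂ :=
  if Even (n : ℕ) then 2 * (n : ℂ) ^ (-(k:ℂ)) * (w ^ (n:ℕ) / (1 - w ^ (2*(n:ℕ)))) else 0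

lemma U_summable (k : ℝ) {w : ℂ} (hw : ‖w‖ < 1) : Summable (U k w) := by
  have hpos : 0 < 1 - ‖w‖ := by linarith
  apply summable_aux (C := 2 * (1 - ‖w‖)⁻¹) k (norm_nonneg w) hw (mul_nonneg (by norm_num) (inv_nonneg.2 hpos.le))
  intro n
  rw [U]
  split_ifs with h
  · have hne : 2*(n:ℕ) ≠ 0 := by positivity
    rw [mul_assoc, norm_mul, norm_mul, norm_coef, norm_div, norm_pow]
    have h1 : ‖w‖^(n:ℕ) / ‖1 - w^(2*(n:ℕ))‖ ≤ ‖w‖^(n:ℕ) * (1-‖w‖)⁻¹ := by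
      rw [div_eq_mul_inv]
      exact mul_le_mul_of_nonneg_left (inv_anti₀ hpos (norm_one_sub_pow hw hne)) (by positivity)
    calc ‖(2:ℂ)‖ * ((n:ℝ)^(-k) * (‖w‖^(n:ℕ) / ‖1 - w^(2*(n:ℕ))‖))
        ≤ 2 * ((n:ℝ)^(-k) * (‖w‖^(n:ℕ) * (1-‖w‖)⁻¹)) := by
          rw [Complex.norm_ofNat]
          exact mul_le_mul_of_nonneg_left
            (mul_le_mul_of_nonneg_left h1 (Real.rpow_nonneg (by positivity) _)) (by norm_num)
      _ = (n:ℝ)^(-k) * ‖w‖^(n:ℕ) * (2 * (1-‖w‖)⁻¹) := by ring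
  · simp only [norm_zero]
    positivity

lemma key_pointwise (k : ℝ) {w : ℂ} (hw : ‖w‖ < 1) (n : ℕ+) :
    Lt k (-w) n + Lt k w n = 2 * Lt k (w^2) n + U k w n := by
  have hne : (n:ℕ) ≠ 0 := n.pos.ne'
  have h1 : 1 - w^(n:ℕ) ≠ 0 := one_sub_pow_ne hw hne
  have h2 : 1 + w^(n:ℕ) ≠ 0 := one_add_pow_ne hw hne
  have hsq : w^(2*(n:ℕ)) = (w^(n:ℕ))^2 := by rw [mul_comm, pow_mul]
  have h3 : 1 - (w^(n:ℕ))^2 ≠ 0 := by rw [← hsq]; exact one_sub_pow_ne hw (by positivity)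
  have hw2 : (w^2)^(n:ℕ) = (w^(n:ℕ))^2 := by rw [← pow_mul, mul_comm, pow_mul]
  rcases Nat.even_or_odd (n:ℕ) with he | ho
  · have hneg : (-w)^(n:ℕ) = w^(n:ℕ) := he.neg_pow w
    rw [Lt, Lt, Lt, U, if_pos he, hneg, hw2, hsq]
    field_simp
    ring
  · have hneg : (-w)^(n:ℕ) = -(w^(n:ℕ)) := ho.neg_pow w
    rw [Lt, Lt, Lt, U, if_neg (Nat.not_even_iff_odd.2 ho), hneg, hw2, sub_neg_eq_add]
    field_simp
    ring

lemma coef_split (k : ℝ) (m : ℕ+) :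
    (((2*m : ℕ+) : ℕ) : ℂ) ^ (-(k:ℂ)) = (2:ℂ)^(-(k:ℂ)) * ((m:ℕ):ℂ)^(-(k:ℂ)) := by
  have h : (((2*m : ℕ+) : ℕ) : ℂ) = ((2:ℝ):ℂ) * (((m:ℕ):ℝ):ℂ) := by push_cast; ring
  rw [h, Complex.mul_cpow_ofReal_nonneg (by norm_num) (by positivity)]
  norm_num

lemma U_even_term (k : ℝ) {w : ℂ} (hw : ‖w‖ < 1) (m : ℕ+) :
    U k w (2*m) = 2 * (2:ℂ)^(-(k:ℂ)) * (Lt k (w^2) m - Lt k (w^4) m) := by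
  have hme : ((2*m : ℕ+) : ℕ) = 2*(m:ℕ) := by push_cast; ring
  have heven : Even ((2*m : ℕ+) : ℕ) := by rw [hme]; exact even_two_mul _
  have hne : (m:ℕ) ≠ 0 := m.pos.ne'
  have hV2 : (w^2)^(m:ℕ) = w^(2*(m:ℕ)) := by rw [mul_comm, pow_mul]; ring
  have hV4 : (w^4)^(m:ℕ) = (w^(2*(m:ℕ)))^2 := by
    rw [mul_comm, pow_mul, ← pow_mul, ← pow_mul]; ring_nf
  have hd2 : 1 - (w^2)^(m:ℕ) ≠ 0 := one_sub_pow_ne (pow_norm_lt hw two_ne_zero) hne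
  have hd4 : 1 - (w^4)^(m:ℕ) ≠ 0 := one_sub_pow_ne (pow_norm_lt hw (by norm_num)) hne
  rw [U, if_pos heven, Lt, Lt, coef_split k m]
  rw [hme]
  have h24 : w ^ (2*(2*(m:ℕ))) = (w^4)^(m:ℕ) := by rw [← pow_mul]; ring_nf
  rw [h24, show w^(2*(m:ℕ)) = (w^2)^(m:ℕ) from hV2.symm]
  have hV4' : (w^4)^(m:ℕ) = ((w^2)^(m:ℕ))^2 := by rw [hV4, hV2]
  rw [hV4']
  set V := (w^2)^(m:ℕ) with hV
  have hdV : 1 - V ≠ 0 := hd2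
  have hdV2 : 1 - V^2 ≠ 0 := by rw [← hV4']; exact hd4
  field_simp
  ring

lemma U_tsum (k : ℝ) {w : ℂ} (hw : ‖w‖ < 1) :
    ∑' n : ℕ+, U k w n = 2 * (2:ℂ)^(-(k:ℂ)) * (L k (w^2) - L k (w^4)) := by
  have hinj : Function.Injective (fun m : ℕ+ => 2*m) := by
    intro a b h
    have : 2*(a:ℕ) = 2*(b:ℕ) := by exact_mod_cast congrArg (fun x : ℕ+ => (x:ℕ)) h
    exact PNat.coe_injective (Nat.eq_of_mul_eq_mul_left (by norm_num) this)
  have hsupp : Function.support (U k w) ⊆ Set.range (fun m : ℕ+ => 2*m) := by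
    intro n hn
    rw [Function.mem_support, U] at hn
    split_ifs at hn with h
    · obtain ⟨r, hr⟩ := h
      have hrpos : 0 < r := by
        rcases Nat.eq_zero_or_pos r with h0 | h0
        · exfalso; have := n.pos; omega
        · exact h0
      refine ⟨⟨r, hrpos⟩, ?_⟩
      apply PNat.coe_injective
      dsimp only
      change 2 * r = (n : ℕ)
      show 2 * r = (n : ℕ)
      omega
    · exact absurd rfl hn
  have hre : ∑' m : ℕ+, U k w (2*m) = ∑' n : ℕ+, U k w n :=
    Function.Injective.tsum_eq hinj hsupp
  rw [← hre]
  have hC := L_summable k (pow_norm_lt hw (two_ne_zero))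
  have hD := L_summable k (pow_norm_lt hw (show (4:ℕ) ≠ 0 by norm_num))
  calc ∑' m : ℕ+, U k w (2*m)
      = ∑' m : ℕ+, 2 * (2:ℂ)^(-(k:ℂ)) * (Lt k (w^2) m - Lt k (w^4) m) :=
        tsum_congr (fun m => U_even_term k hw m)
    _ = 2 * (2:ℂ)^(-(k:ℂ)) * ∑' m : ℕ+, (Lt k (w^2) m - Lt k (w^4) m) := tsum_mul_left
    _ = 2 * (2:ℂ)^(-(k:ℂ)) * (L k (w^2) - L k (w^4)) := by rw [Summable.tsum_sub hC hD]; rfl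

lemma L_id (k : ℝ) {w : ℂ} (hw : ‖w‖ < 1) :
    L k (-w) + L k w
      = (2 + 2*(2:ℂ)^(-(k:ℂ))) * L k (w^2) - 2*(2:ℂ)^(-(k:ℂ)) * L k (w^4) := by
  have hA := L_summable k (show ‖-w‖ < 1 by simpa using hw)
  have hB := L_summable k hw
  have hC := L_summable k (pow_norm_lt hw (two_ne_zero))
  have hu := U_summable k hw
  calc L k (-w) + L k w = ∑' n : ℕ+, (Lt k (-w) n + Lt k w n) := (Summable.tsum_add hA hB).symm
    _ = ∑' n : ℕ+, (2 * Lt k (w^2) n + U k w n) := tsum_congr (key_pointwise k hw)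
    _ = 2 * L k (w^2) + ∑' n : ℕ+, U k w n := by
        rw [Summable.tsum_add (hC.mul_left 2) hu, tsum_mul_left]; rfl
    _ = 2 * L k (w^2) + 2 * (2:ℂ)^(-(k:ℂ)) * (L k (w^2) - L k (w^4)) := by rw [U_tsum k hw]
    _ = (2 + 2*(2:ℂ)^(-(k:ℂ))) * L k (w^2) - 2*(2:ℂ)^(-(k:ℂ)) * L k (w^4) := by ring

lemma exp_term_eq (z : ℂ) (n : ℕ+) :
    Complex.exp (2 * Real.pi * Complex.I * n * z) = Complex.exp (2 * Real.pi * Complex.I * z) ^ (n : ℕ) := by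
  rw [show (2 * (Real.pi:ℂ) * Complex.I * n * z) = ((n:ℕ):ℂ) * (2 * Real.pi * Complex.I * z) by push_cast; ring,
    Complex.exp_nat_mul]

lemma P_eq_L (k : ℝ) (z : ℂ) : P k z = L k (Complex.exp (2 * Real.pi * Complex.I * z)) := by
  rw [P, L]
  apply tsum_congr
  intro n
  rw [Lt, exp_term_eq]

lemma P_eq_L_half (k : ℝ) (z : ℂ) :
    P k (z - 1/2) = L k (-Complex.exp (2 * Real.pi * Complex.I * z)) := by
  rw [P, L]
  apply tsum_congr
  intro n
  rw [Lt]
  have key : Complex.exp (2 * Real.pi * Complex.I * n * (z - 1/2))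
      = (-Complex.exp (2 * Real.pi * Complex.I * z)) ^ (n : ℕ) := by
    rw [show (2 * (Real.pi:ℂ) * Complex.I * n * (z - 1/2))
        = ((n:ℕ):ℂ) * (2 * Real.pi * Complex.I * z) + ((n:ℕ):ℂ) * (-(Real.pi * Complex.I)) by
          push_cast; ring,
      Complex.exp_add, Complex.exp_nat_mul, Complex.exp_nat_mul, Complex.exp_neg,
      Complex.exp_pi_mul_I, neg_pow]
    rw [inv_neg, inv_one]
    ring
  rw [key]

lemma exp_double (z : ℂ) :
    Complex.exp (2 * Real.pi * Complex.I * (2 * z)) = Complex.exp (2 * Real.pi * Complex.I * z) ^ 2 := by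
  rw [show (2 * (Real.pi:ℂ) * Complex.I * (2 * z)) = ((2:ℕ):ℂ) * (2 * Real.pi * Complex.I * z) by
      push_cast; ring, Complex.exp_nat_mul]

lemma exp_quad (z : ℂ) :
    Complex.exp (2 * Real.pi * Complex.I * (4 * z)) = Complex.exp (2 * Real.pi * Complex.I * z) ^ 4 := by
  rw [show (2 * (Real.pi:ℂ) * Complex.I * (4 * z)) = ((4:ℕ):ℂ) * (2 * Real.pi * Complex.I * z) by
      push_cast; ring, Complex.exp_nat_mul]

lemma norm_w_lt_one {z : ℂ} (hz : 0 < z.im) :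
    ‖Complex.exp (2 * Real.pi * Complex.I * z)‖ < 1 := by
  rw [Complex.norm_exp, Real.exp_lt_one_iff]
  have hre : (2 * (Real.pi:ℂ) * Complex.I * z).re = -(2 * Real.pi * z.im) := by
    simp [Complex.mul_re, Complex.mul_im]
  rw [hre]
  have := Real.pi_pos
  nlinarith

theorem doubling (k : ℝ) (z : ℂ) (hz : 0 < z.im) :
    P k (z - 1 / 2) + P k z =
      (2 + (((2 : ℝ) ^ (1 - k) : ℝ) : ℂ)) * P k (2 * z)
        - (((2 : ℝ) ^ (1 - k) : ℝ) : ℂ) * P k (4 * z) := by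
  have hw := norm_w_lt_one hz
  have hcoef : (((2 : ℝ) ^ (1 - k) : ℝ) : ℂ) = 2 * (2:ℂ) ^ (-(k:ℂ)) := by
    rw [show (1 - k) = 1 + (-k) by ring, Real.rpow_add (by norm_num : (0:ℝ) < 2), Real.rpow_one,
      Complex.ofReal_mul, Complex.ofReal_cpow (by norm_num : (0:ℝ) ≤ 2)]
    push_cast
    ring
  rw [P_eq_L_half k z, P_eq_L k z, P_eq_L k (2*z), P_eq_L k (4*z), exp_double, exp_quad, hcoef]
  exact L_id k hw
end

section
/- For every real number k and every complex number z with Im z > 0, P_k(z − 1/3) + P_k(z) + P_k(z + 1/3) = (3 + 3^{1−k}) · P_k(3z) − 3^{1−k} · P_k(9z). -/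
open Complex

noncomputable def Pterm (k : ℝ) (z : ℂ) (n : ℕ+) : ℂ :=
  (n : ℂ) ^ (-(k : ℂ)) *
    (Complex.exp (2 * Real.pi * Complex.I * n * z) /
      (1 - Complex.exp (2 * Real.pi * Complex.I * n * z)))

lemma sum_three_prods (x ω : ℂ) (hq : ω^2 + ω + 1 = 0) (hω : ω^3 = 1) :
    (1-x)*(1-x*ω) + (1-x*ω^2)*(1-x*ω) + (1-x*ω^2)*(1-x) = 3 := by
  linear_combination (x^2 - 2*x)*hq + x^2*hω

lemma prod_three (x ω : ℂ) (hq : ω^2 + ω + 1 = 0) (hω : ω^3 = 1) :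
    1 - x^3 = (1-x*ω^2)*((1-x)*(1-x*ω)) := by
  linear_combination (x - x^2)*hq + (x^3 - x^2)*hω

lemma cube_sum (x ω : ℂ) (ha : 1 - x*ω^2 ≠ 0) (hb : 1 - x ≠ 0) (hc : 1 - x*ω ≠ 0)
    (hq : ω^2 + ω + 1 = 0) (hω : ω^3 = 1) :
    x*ω^2/(1 - x*ω^2) + x/(1 - x) + x*ω/(1 - x*ω) = 3*(x^3/(1 - x^3)) := by
  rw [prod_three x ω hq hω]
  rw [div_add_div _ _ ha hb, div_add_div _ _ (mul_ne_zero ha hb) hc, mul_div_assoc',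
    div_eq_div_iff (mul_ne_zero (mul_ne_zero ha hb) hc) (mul_ne_zero ha (mul_ne_zero hb hc))]
  linear_combination ((x - 2*x^2)*hq + (3*x^3 - 2*x^2)*hω) * ((1-x*ω^2)*(1-x)*(1-x*ω))

lemma abs_exp_eq (z : ℂ) (n : ℕ+) :
    ‖Complex.exp (2 * Real.pi * Complex.I * n * z)‖
      = Real.exp (-(2 * Real.pi * z.im)) ^ (n : ℕ) := by
  have h : 2 * (Real.pi:ℂ) * Complex.I * n * z
      = ((2 * Real.pi * (n:ℕ) : ℝ) : ℂ) * z * Complex.I := by push_cast; ring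
  rw [h, Complex.norm_exp, ← Real.exp_nat_mul]
  congr 1
  simp [Complex.mul_I_re]
  push_cast; ring

lemma abs_exp_lt_one (z : ℂ) (hz : 0 < z.im) (n : ℕ+) :
    ‖Complex.exp (2 * Real.pi * Complex.I * n * z)‖ < 1 := by
  rw [abs_exp_eq]
  apply pow_lt_one₀ (Real.exp_nonneg _) _ (by exact_mod_cast n.ne_zero)
  apply Real.exp_lt_one_iff.mpr
  have := Real.pi_pos
  nlinarith

lemma one_sub_exp_ne_zero (z : ℂ) (hz : 0 < z.im) (n : ℕ+) :
    1 - Complex.exp (2 * Real.pi * Complex.I * n * z) ≠ 0 := by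
  intro h
  have h2 : Complex.exp (2 * Real.pi * Complex.I * n * z) = 1 := by
    linear_combination -h
  have := abs_exp_lt_one z hz n
  rw [h2] at this; simp at this

lemma summable_Pterm (k : ℝ) (z : ℂ) (hz : 0 < z.im) : Summable (Pterm k z) := by
  set r : ℝ := Real.exp (-(2 * Real.pi * z.im)) with hr
  have hr0 : 0 < r := Real.exp_pos _
  have hr1 : r < 1 := by
    apply Real.exp_lt_one_iff.mpr; have := Real.pi_pos; nlinarith
  set m : ℕ := ⌈-k⌉₊ with hm
  have hsum : Summable (fun n : ℕ => ((n : ℝ) ^ m * r ^ n) * (1 - r)⁻¹) := by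
    apply Summable.mul_right
    have := summable_pow_mul_geometric_of_norm_lt_one (R := ℝ) m
      (r := r) (by rwa [Real.norm_eq_abs, abs_of_pos hr0])
    exact this.congr (by intro n; push_cast; ring)
  apply Summable.of_norm_bounded (hsum.comp_injective PNat.coe_injective)
  intro n
  have hn1 : (1:ℝ) ≤ (n:ℕ) := by exact_mod_cast n.one_le
  have habs : ‖Complex.exp (2 * Real.pi * Complex.I * n * z)‖ = r ^ (n:ℕ) :=
    abs_exp_eq z n
  have hden : 1 - r ≤ ‖1 - Complex.exp (2 * Real.pi * Complex.I * n * z)‖ := by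
    have h1 : r ^ (n:ℕ) ≤ r ^ 1 := pow_le_pow_of_le_one hr0.le hr1.le n.one_le
    calc 1 - r ≤ 1 - r ^ (n:ℕ) := by nlinarith
    _ ≤ ‖(1:ℂ)‖ - ‖Complex.exp (2 * Real.pi * Complex.I * n * z)‖ := by
        rw [habs]; simp
    _ ≤ ‖1 - Complex.exp (2 * Real.pi * Complex.I * n * z)‖ :=
        norm_sub_norm_le _ _
  have hcpow : ‖(n : ℂ) ^ (-(k:ℂ))‖ = (n:ℝ) ^ (-k) := by
    have : ((n:ℕ):ℂ) = (((n:ℕ):ℝ):ℂ) := by push_cast; ring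
    rw [this, Complex.norm_cpow_eq_rpow_re_of_pos (by positivity)]
    simp
  have hpow : (n:ℝ) ^ (-k) ≤ (n:ℝ) ^ m := by
    rw [← Real.rpow_natCast]
    exact Real.rpow_le_rpow_of_exponent_le hn1 (Nat.le_ceil _)
  rw [Pterm]
  simp only [Function.comp_apply, norm_mul, norm_div]
  rw [hcpow, habs]
  have hd0 : (0:ℝ) < 1 - r := by linarith
  calc (n:ℝ) ^ (-k) * (r ^ (n:ℕ) / ‖1 - Complex.exp (2 * Real.pi * Complex.I * n * z)‖)
      ≤ (n:ℝ) ^ m * (r ^ (n:ℕ) / (1 - r)) := by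
        apply mul_le_mul hpow _ (by positivity) (by positivity)
        apply div_le_div_of_nonneg_left (by positivity) hd0 hden
    _ = ((n:ℕ):ℝ) ^ m * r ^ (n:ℕ) * (1 - r)⁻¹ := by rw [div_eq_mul_inv]; ring

lemma one_sub_ne (y : ℂ) (h : ‖y‖ < 1) : 1 - y ≠ 0 := by
  intro h0
  have : y = 1 := by linear_combination -h0
  rw [this] at h; simp at h

noncomputable def Dterm (k : ℝ) (z : ℂ) (n : ℕ+) : ℂ :=
  if 3 ∣ (n:ℕ) then
    3 * (n : ℂ) ^ (-(k : ℂ)) *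
      (Complex.exp (2 * Real.pi * Complex.I * n * z) /
          (1 - Complex.exp (2 * Real.pi * Complex.I * n * z))
        - Complex.exp (2 * Real.pi * Complex.I * n * (3*z)) /
          (1 - Complex.exp (2 * Real.pi * Complex.I * n * (3*z))))
  else 0

lemma per_n (k : ℝ) (z : ℂ) (hz : 0 < z.im) (n : ℕ+) :
    Pterm k (z - 1/3) n + Pterm k z n + Pterm k (z + 1/3) n
      = 3 * Pterm k (3*z) n + Dterm k z n := by
  set x := Complex.exp (2 * Real.pi * Complex.I * n * z) with hxdef
  set ω := Complex.exp (2 * Real.pi * Complex.I * n / 3) with hωdef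
  have hx1 : ‖x‖ < 1 := abs_exp_lt_one z hz n
  have hplus : Complex.exp (2 * Real.pi * Complex.I * n * (z + 1/3)) = x * ω := by
    rw [hxdef, hωdef, ← Complex.exp_add]; congr 1; ring
  have hminus : Complex.exp (2 * Real.pi * Complex.I * n * (z - 1/3)) = x * ω⁻¹ := by
    rw [hxdef, hωdef, ← Complex.exp_neg, ← Complex.exp_add]; congr 1; ring
  have h3z : Complex.exp (2 * Real.pi * Complex.I * n * (3*z)) = x^3 := by
    rw [hxdef, ← Complex.exp_nat_mul]; congr 1; push_cast; ring
  have hω3 : ω^3 = 1 := by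
    rw [hωdef, ← Complex.exp_nat_mul]
    rw [show ((3:ℕ):ℂ) * (2 * Real.pi * Complex.I * n / 3)
        = (n:ℂ) * (2 * Real.pi * Complex.I) by push_cast; ring]
    simpa using Complex.exp_int_mul_two_pi_mul_I (n:ℕ)
  by_cases h3 : 3 ∣ (n:ℕ)
  · obtain ⟨m, hm⟩ := h3
    have hω1 : ω = 1 := by
      rw [hωdef]
      have : 2 * (Real.pi:ℂ) * Complex.I * n / 3 = (m:ℂ) * (2 * Real.pi * Complex.I) := by
        have : ((n:ℕ):ℂ) = 3 * (m:ℂ) := by exact_mod_cast congrArg (Nat.cast (R := ℂ)) hm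
        rw [this]; ring
      rw [this]
      simpa using Complex.exp_int_mul_two_pi_mul_I (m:ℤ)
    rw [Dterm, if_pos ⟨m, hm⟩]
    simp only [Pterm, hplus, hminus, h3z, hω1, inv_one, mul_one]
    ring
  · have hω1 : ω ≠ 1 := by
      intro h1
      obtain ⟨j, hj⟩ := Complex.exp_eq_one_iff.mp (hωdef ▸ h1)
      have h2pi : (2 : ℂ) * Real.pi * Complex.I ≠ 0 := by
        simp [Complex.ext_iff, Real.pi_ne_zero]
      have : (n:ℂ) = 3 * (j:ℂ) := by
        have := mul_left_cancel₀ h2pi (by linear_combination 3 * hj :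
          (2 * (Real.pi:ℂ) * Complex.I) * (n:ℂ) = (2 * (Real.pi:ℂ) * Complex.I) * (3*(j:ℂ)))
        exact this
      have hint : (n:ℤ) = 3 * j := by exact_mod_cast this
      exact h3 (by exact_mod_cast (Dvd.intro j hint.symm : (3:ℤ) ∣ (n:ℤ)))
    have hq : ω^2 + ω + 1 = 0 := by
      rcases mul_eq_zero.mp (show (ω - 1) * (ω^2 + ω + 1) = 0 by linear_combination hω3) with h | h
      · exact absurd (by linear_combination h) hω1
      · exact h
    have hωinv : ω⁻¹ = ω^2 := inv_eq_of_mul_eq_one_right (by linear_combination hω3)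
    have habsω : ‖ω‖ = 1 := by
      have h1 : (‖ω‖)^3 = 1 := by rw [← norm_pow, hω3]; simp
      nlinarith [norm_nonneg ω, sq_nonneg (‖ω‖ - 1), sq_nonneg (‖ω‖ + 1)]
    have ha : 1 - x * ω^2 ≠ 0 := one_sub_ne _ (by
      rw [norm_mul, norm_pow, habsω]; simpa using hx1)
    have hb : 1 - x ≠ 0 := one_sub_ne _ hx1
    have hc : 1 - x * ω ≠ 0 := one_sub_ne _ (by rw [norm_mul, habsω]; simpa using hx1)
    rw [Dterm, if_neg h3, add_zero]
    simp only [Pterm, hplus, hminus, h3z, hωinv]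
    have := cube_sum x ω ha hb hc hq hω3
    linear_combination ((n:ℂ) ^ (-(k:ℂ))) * this

lemma im_facts (z : ℂ) (hz : 0 < z.im) :
    0 < (z - 1/3).im ∧ 0 < (z + 1/3).im ∧ 0 < ((3:ℂ)*z).im ∧ 0 < ((9:ℂ)*z).im := by
  refine ⟨?_, ?_, ?_, ?_⟩ <;>
    · simp [Complex.sub_im, Complex.add_im, Complex.mul_im]
      norm_num [hz]

lemma three_cpow (k : ℝ) : (((3:ℝ) ^ (1 - k) : ℝ) : ℂ) = 3 * (3:ℂ) ^ (-(k:ℂ)) := by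
  rw [Complex.ofReal_cpow (by norm_num : (0:ℝ) ≤ 3)]
  push_cast
  rw [Complex.cpow_sub _ _ (by norm_num : (3:ℂ) ≠ 0), Complex.cpow_one,
    Complex.cpow_neg, div_eq_mul_inv]

lemma Dterm_triple (k : ℝ) (z : ℂ) (m : ℕ+) :
    Dterm k z (3*m) = (((3:ℝ) ^ (1 - k) : ℝ) : ℂ) * (Pterm k (3*z) m - Pterm k (9*z) m) := by
  have hdvd : 3 ∣ ((3*m : ℕ+) : ℕ) := ⟨m, by push_cast; ring⟩
  rw [Dterm, if_pos hdvd, Pterm, Pterm]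
  have e1 : Complex.exp (2 * Real.pi * Complex.I * ((3*m : ℕ+):ℂ) * z)
      = Complex.exp (2 * Real.pi * Complex.I * m * (3*z)) := by congr 1; push_cast; ring
  have e2 : Complex.exp (2 * Real.pi * Complex.I * ((3*m : ℕ+):ℂ) * (3*z))
      = Complex.exp (2 * Real.pi * Complex.I * m * (9*z)) := by congr 1; push_cast; ring
  have e3 : ((3*m : ℕ+) : ℂ) ^ (-(k:ℂ)) = (3:ℂ) ^ (-(k:ℂ)) * (m:ℂ) ^ (-(k:ℂ)) := by
    rw [show ((3*m : ℕ+) : ℂ) = (((3:ℝ)):ℂ) * (((m:ℕ):ℝ):ℂ) by push_cast; ring,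
      Complex.mul_cpow_ofReal_nonneg (by norm_num) (by positivity)]
    norm_num
  rw [e1, e2, e3, three_cpow]
  ring

lemma Dsum (k : ℝ) (z : ℂ) (hz : 0 < z.im) :
    ∑' n : ℕ+, Dterm k z n
      = (((3:ℝ) ^ (1 - k) : ℝ) : ℂ) * (P k (3*z) - P k (9*z)) := by
  obtain ⟨-, -, h3, h9⟩ := im_facts z hz
  have hinj : Function.Injective (fun m : ℕ+ => 3*m) := fun a b h => by
    have h2 : (3:ℕ) * (a:ℕ) = 3 * (b:ℕ) := by exact_mod_cast congrArg (PNat.val) h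
    exact PNat.coe_injective (Nat.eq_of_mul_eq_mul_left (by norm_num) h2)
  have hsupp : Function.support (Dterm k z) ⊆ Set.range (fun m : ℕ+ => 3*m) := by
    intro n hn
    simp only [Function.mem_support] at hn
    by_cases h3 : 3 ∣ (n:ℕ)
    · obtain ⟨m, hm⟩ := h3
      have hmpos : 0 < m := by have := n.pos; omega
      refine ⟨⟨m, hmpos⟩, PNat.coe_injective ?_⟩
      rw [hm]; rfl
    · rw [Dterm, if_neg h3] at hn
      exact (hn rfl).elim
  rw [← hinj.tsum_eq hsupp]
  have hs3 := summable_Pterm k (3*z) h3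
  have hs9 := summable_Pterm k (9*z) h9
  calc ∑' m : ℕ+, Dterm k z (3*m)
      = ∑' m : ℕ+, (((3:ℝ) ^ (1 - k) : ℝ) : ℂ) * (Pterm k (3*z) m - Pterm k (9*z) m) :=
        tsum_congr (Dterm_triple k z)
    _ = (((3:ℝ) ^ (1 - k) : ℝ) : ℂ) * (P k (3*z) - P k (9*z)) := by
        rw [tsum_mul_left, Summable.tsum_sub hs3 hs9]
        rfl

theorem trebling (k : ℝ) (z : ℂ) (hz : 0 < z.im) :
    P k (z - 1 / 3) + P k z + P k (z + 1 / 3) =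
      (3 + (((3 : ℝ) ^ (1 - k) : ℝ) : ℂ)) * P k (3 * z)
        - (((3 : ℝ) ^ (1 - k) : ℝ) : ℂ) * P k (9 * z) := by
  obtain ⟨hm1, hp1, h3, h9⟩ := im_facts z hz
  have hsm := summable_Pterm k (z - 1/3) hm1
  have hs0 := summable_Pterm k z hz
  have hsp := summable_Pterm k (z + 1/3) hp1
  have hs3 := summable_Pterm k (3*z) h3
  have hsD : Summable (Dterm k z) := by
    apply Summable.congr (((hsm.add hs0).add hsp).sub (hs3.mul_left 3))
    intro n
    linear_combination per_n k z hz n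
  have key : P k (z - 1/3) + P k z + P k (z + 1/3)
      = ∑' n : ℕ+, (3 * Pterm k (3*z) n + Dterm k z n) := by
    rw [← tsum_congr (per_n k z hz), show P k (z-1/3) = ∑' n, Pterm k (z-1/3) n from rfl,
      show P k z = ∑' n, Pterm k z n from rfl, show P k (z+1/3) = ∑' n, Pterm k (z+1/3) n from rfl,
      ← Summable.tsum_add hsm hs0, ← Summable.tsum_add (hsm.add hs0) hsp]
  rw [key, Summable.tsum_add (hs3.mul_left 3) hsD, tsum_mul_left, Dsum k z hz]
  show 3 * P k (3*z) + _ = _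
  ring
end

section
/- For every real number k and every complex number z with Im z > 0, P_k(z − 1/4) + P_k(z + 1/4) = ((2 + 2^{1−k})^2 − 2^{1−k}) · P_k(4z) − (2 + 2^{1−k}) · ( P_k(2z) + 2^{1−k} · P_k(8z) ). -/
open Complex Real

noncomputable def Ez (z : ℂ) (m : ℕ+) : ℂ := Complex.exp (2 * Real.pi * Complex.I * m * z)
noncomputable def Az (z : ℂ) (m : ℕ+) : ℂ := Ez z m / (1 - Ez z m)
noncomputable def gg (k : ℝ) (n : ℕ+) : ℂ := (n : ℂ) ^ (-(k : ℂ))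
noncomputable def trm (k : ℝ) (w : ℂ) (n : ℕ+) : ℂ := gg k n * Az w n
noncomputable def Wf (k : ℝ) (z : ℂ) (n : ℕ+) : ℂ :=
  gg k n * (4 * Az z (4 * n) - 2 * Az z (2 * n))

lemma P_eq (k : ℝ) (w : ℂ) : P k w = ∑' n : ℕ+, trm k w n := rfl

lemma norm_Ez (z : ℂ) (m : ℕ+) : ‖Ez z m‖ = Real.exp (-(2 * Real.pi * z.im)) ^ (m : ℕ) := by
  rw [Ez, Complex.norm_exp, ← Real.exp_nat_mul]
  congr 1
  simp [Complex.mul_re, Complex.mul_im]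
  ring

lemma norm_Ez_lt_one {z : ℂ} (hz : 0 < z.im) (m : ℕ+) : ‖Ez z m‖ < 1 := by
  rw [norm_Ez]
  apply pow_lt_one₀ (Real.exp_nonneg _) _ m.ne_zero
  rw [Real.exp_lt_one_iff]
  nlinarith [Real.pi_pos]

lemma one_sub_Ez_ne {z : ℂ} (hz : 0 < z.im) (m : ℕ+) : 1 - Ez z m ≠ 0 := by
  intro h
  have h1 : Ez z m = 1 := by linear_combination -h
  have h2 := norm_Ez_lt_one hz m
  rw [h1] at h2
  simp at h2

lemma Ez_two (z : ℂ) (m : ℕ+) : Ez z (2 * m) = (Ez z m) ^ 2 := by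
  rw [Ez, Ez, ← Complex.exp_nat_mul]
  congr 1
  push_cast
  ring

lemma exp_quarter : Complex.exp (2 * Real.pi * Complex.I * (1/4 : ℂ)) = Complex.I := by
  have h : (2 : ℂ) * Real.pi * Complex.I * (1/4 : ℂ) = (Real.pi/2 : ℂ) * Complex.I := by ring
  rw [h, Complex.exp_mul_I]
  rw [Complex.cos_pi_div_two, Complex.sin_pi_div_two]
  ring

lemma Ez_shift_plus (z : ℂ) (n : ℕ+) :
    Ez (z + 1/4) n = Ez z n * Complex.I ^ (n : ℕ) := by
  show Complex.exp (2 * Real.pi * Complex.I * n * (z + 1/4)) = _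
  have h : (2 : ℂ) * Real.pi * Complex.I * n * (z + 1/4)
      = 2 * Real.pi * Complex.I * n * z + (n : ℕ) * (2 * Real.pi * Complex.I * (1/4 : ℂ)) := by
    ring
  rw [h, Complex.exp_add, Complex.exp_nat_mul, exp_quarter, Ez]

lemma Ez_shift_minus (z : ℂ) (n : ℕ+) :
    Ez (z - 1/4) n = Ez z n * (-Complex.I) ^ (n : ℕ) := by
  show Complex.exp (2 * Real.pi * Complex.I * n * (z - 1/4)) = _
  have h : (2 : ℂ) * Real.pi * Complex.I * n * (z - 1/4)
      = 2 * Real.pi * Complex.I * n * z + (n : ℕ) * (-(2 * Real.pi * Complex.I * (1/4 : ℂ))) := by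
    ring
  rw [h, Complex.exp_add, Complex.exp_nat_mul, Complex.exp_neg, exp_quarter, Ez, inv_I]

lemma norm_g (k : ℝ) (n : ℕ+) : ‖(n : ℂ) ^ (-(k : ℂ))‖ = (n : ℝ) ^ (-k : ℝ) := by
  have h : ((n : ℝ) : ℂ) = (n : ℂ) := by push_cast; ring
  rw [← h, Complex.norm_cpow_eq_rpow_re_of_pos (by exact_mod_cast n.pos)]
  norm_num

lemma summable_term (k : ℝ) {w : ℂ} (hw : 0 < w.im) : Summable (trm k w) := by
  unfold trm gg Az
  set r : ℝ := Real.exp (-(2 * Real.pi * w.im)) with hr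
  have hr0 : 0 ≤ r := Real.exp_nonneg _
  have hr1 : r < 1 := by
    rw [hr, Real.exp_lt_one_iff]; nlinarith [Real.pi_pos]
  set N : ℕ := ⌈|k|⌉₊ with hN
  have hsum : Summable (fun n : ℕ => ((n : ℝ) ^ N * r ^ n) * (1 - r)⁻¹) := by
    apply Summable.mul_right
    have := summable_pow_mul_geometric_of_norm_lt_one (R := ℝ) N (r := r) (by
      rwa [Real.norm_eq_abs, _root_.abs_of_nonneg hr0])
    simpa using this
  apply Summable.of_norm_bounded (hsum.comp_injective (fun a b h => PNat.coe_injective h))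
  intro n
  have hEn : ‖Ez w n‖ = r ^ (n : ℕ) := norm_Ez w n
  have hrn : r ^ (n : ℕ) ≤ r := by
    calc r ^ (n : ℕ) ≤ r ^ 1 := pow_le_pow_of_le_one hr0 hr1.le n.one_le
    _ = r := pow_one r
  have hden : 1 - r ≤ ‖1 - Ez w n‖ := by
    calc 1 - r ≤ 1 - ‖Ez w n‖ := by rw [hEn]; linarith
    _ ≤ ‖1 - Ez w n‖ := by
        have := norm_sub_norm_le (1 : ℂ) (Ez w n)
        simpa using this
  have hg : ‖(n : ℂ) ^ (-(k : ℂ))‖ ≤ (n : ℝ) ^ N := by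
    rw [norm_g]
    calc (n : ℝ) ^ (-k : ℝ) ≤ (n : ℝ) ^ (N : ℝ) := by
          apply Real.rpow_le_rpow_of_exponent_le (by exact_mod_cast n.one_le)
          calc (-k : ℝ) ≤ |k| := by cases abs_cases k <;> linarith
          _ ≤ N := Nat.le_ceil _
    _ = (n : ℝ) ^ N := by rw [Real.rpow_natCast]
  have hpos : (0:ℝ) < 1 - r := by linarith
  rw [norm_mul, norm_div]
  calc ‖(n : ℂ) ^ (-(k : ℂ))‖ * (‖Ez w n‖ / ‖1 - Ez w n‖)
      ≤ (n : ℝ) ^ N * (r ^ (n : ℕ) / (1 - r)) := by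
        apply mul_le_mul hg _ (by positivity) (by positivity)
        rw [hEn]
        apply div_le_div_of_nonneg_left (by positivity) hpos hden
    _ = ((((n : ℕ) : ℝ)) ^ N * r ^ (n : ℕ)) * (1 - r)⁻¹ := by ring

lemma two_mul_injective : Function.Injective (fun u : ℕ+ => 2 * u) := by
  intro a b h
  simp only at h
  have h' : 2 * (a : ℕ) = 2 * (b : ℕ) := by exact_mod_cast congrArg PNat.val h
  exact PNat.coe_injective (by omega)

lemma tsum_even_part (F : ℕ+ → ℂ) :
    ∑' u : ℕ+, F (2 * u) = ∑' n : ℕ+, if Even (n : ℕ) then F n else 0 := by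
  have h := Function.Injective.tsum_eq (f := fun n : ℕ+ => if Even (n : ℕ) then F n else 0)
    two_mul_injective (by
      intro n hn
      simp only [Function.mem_support] at hn
      by_contra hr
      apply hn
      rw [if_neg]
      intro he
      apply hr
      obtain ⟨m, hm⟩ := he
      have hmpos : 0 < m := by have := n.pos; omega
      refine ⟨⟨m, hmpos⟩, ?_⟩
      apply PNat.coe_injective
      show 2 * m = (n : ℕ)
      omega)
  rw [← h]
  apply tsum_congr
  intro u
  have he : Even ((2 * u : ℕ+) : ℕ) := ⟨u, by push_cast; ring⟩
  simp [he]

lemma summable_odd_part {F : ℕ+ → ℂ} (hF : Summable F) :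
    Summable (fun n : ℕ+ => if Even (n : ℕ) then 0 else F n) := by
  have h : (fun n : ℕ+ => if Even (n : ℕ) then 0 else F n)
      = Set.indicator {n : ℕ+ | ¬ Even (n : ℕ)} F := by
    funext n
    rw [Set.indicator_apply]
    simp only [Set.mem_setOf_eq]
    by_cases h : Even (n : ℕ) <;> simp [h]
  rw [h]
  exact hF.indicator _

lemma tsum_split (F : ℕ+ → ℂ) (hF : Summable F) :
    ∑' n, F n = (∑' n : ℕ+, if Even (n : ℕ) then 0 else F n) + ∑' u : ℕ+, F (2 * u) := by
  rw [tsum_even_part]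
  have hodd := summable_odd_part hF
  have heven : Summable (fun n : ℕ+ => if Even (n : ℕ) then F n else 0) := by
    have h : (fun n : ℕ+ => if Even (n : ℕ) then F n else 0)
        = Set.indicator {n : ℕ+ | Even (n : ℕ)} F := by
      funext n
      rw [Set.indicator_apply]
      simp only [Set.mem_setOf_eq]
    rw [h]
    exact hF.indicator _
  rw [← Summable.tsum_add hodd heven]
  apply tsum_congr
  intro n
  by_cases h : Even (n : ℕ) <;> simp [h]

lemma alg_neg {y : ℂ} (h1 : 1 - y ≠ 0) (h2 : 1 - y ^ 2 ≠ 0) :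
    -2 * y / (1 + y) = 4 * (y ^ 2 / (1 - y ^ 2)) - 2 * (y / (1 - y)) := by
  have h3 : 1 + y ≠ 0 := by
    intro h
    apply h2
    have hy : y = -1 := by linear_combination h
    rw [hy]; ring
  field_simp
  ring

lemma alg_odd {x a : ℂ} (ha : a ^ 2 = -1) (h1 : 1 - x * a ≠ 0) (h2 : 1 + x * a ≠ 0)
    (h3 : 1 + x ^ 2 ≠ 0) :
    x * a / (1 - x * a) + (-(x * a)) / (1 + x * a) = -2 * x ^ 2 / (1 + x ^ 2) := by
  field_simp
  linear_combination (2 * x ^ 2) * ha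

lemma g_two (k : ℝ) (n : ℕ+) : gg k (2 * n) = (2 : ℂ) ^ (-(k : ℂ)) * gg k n := by
  unfold gg
  have h : ((2 * n : ℕ+) : ℂ) = ((2 : ℝ) : ℂ) * (((n : ℕ) : ℝ) : ℂ) := by push_cast; ring
  rw [h, Complex.mul_cpow_ofReal_nonneg (by norm_num) (by positivity)]
  norm_num

lemma c_eq (k : ℝ) : (((2 : ℝ) ^ (1 - k) : ℝ) : ℂ) = 2 * (2 : ℂ) ^ (-(k : ℂ)) := by
  rw [Complex.ofReal_cpow (by norm_num)]
  push_cast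
  rw [show ((1 : ℂ) - k) = 1 + (-(k : ℂ)) by ring, Complex.cpow_add _ _ (by norm_num),
    Complex.cpow_one]

lemma neg_combo {z : ℂ} (hz : 0 < z.im) (n : ℕ+) :
    -2 * Ez z (2 * n) / (1 + Ez z (2 * n)) = 4 * Az z (4 * n) - 2 * Az z (2 * n) := by
  have h4 : (4 : ℕ+) * n = 2 * (2 * n) := by
    apply PNat.coe_injective; push_cast; ring
  have h1 : 1 - Ez z (2 * n) ≠ 0 := one_sub_Ez_ne hz _
  have h2 : 1 - (Ez z (2 * n)) ^ 2 ≠ 0 := by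
    rw [← Ez_two]
    exact one_sub_Ez_ne hz _
  rw [Az, Az, h4, Ez_two z (2 * n)]
  exact alg_neg h1 h2

lemma one_add_sq_ne {z : ℂ} (hz : 0 < z.im) (n : ℕ+) : 1 + Ez z (2 * n) ≠ 0 := by
  intro h
  have h4 : (4 : ℕ+) * n = 2 * (2 * n) := by
    apply PNat.coe_injective; push_cast; ring
  have h2 : 1 - Ez z (4 * n) ≠ 0 := one_sub_Ez_ne hz _
  apply h2
  rw [h4, Ez_two]
  have hy : Ez z (2 * n) = -1 := by linear_combination h
  rw [hy]; ring

lemma im_shift (z : ℂ) : (z + 1/4).im = z.im ∧ (z - 1/4).im = z.im := by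
  constructor <;> simp

lemma f_odd (k : ℝ) {z : ℂ} (hz : 0 < z.im) {n : ℕ+} (hn : Odd (n : ℕ)) :
    trm k (z - 1/4) n + trm k (z + 1/4) n = Wf k z n := by
  have hzp : 0 < (z + 1/4).im := by rw [(im_shift z).1]; exact hz
  have hzm : 0 < (z - 1/4).im := by rw [(im_shift z).2]; exact hz
  set x := Ez z n with hx
  set a := Complex.I ^ (n : ℕ) with ha'
  have ha : a ^ 2 = -1 := by
    rw [ha', ← pow_mul, mul_comm, pow_mul, Complex.I_sq, hn.neg_one_pow]
  have hma : (-Complex.I) ^ (n : ℕ) = -a := Odd.neg_pow hn _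
  have hp : Ez (z + 1/4) n = x * a := Ez_shift_plus z n
  have hm : Ez (z - 1/4) n = -(x * a) := by
    rw [Ez_shift_minus z n, hma]; ring
  have h1 : 1 - x * a ≠ 0 := by rw [← hp]; exact one_sub_Ez_ne hzp n
  have h2 : 1 + x * a ≠ 0 := by
    intro h
    apply one_sub_Ez_ne hzm n
    rw [hm]; linear_combination h
  have h3 : 1 + x ^ 2 ≠ 0 := by
    rw [← Ez_two]; exact one_add_sq_ne hz n
  rw [trm, trm, Wf, Az, Az, hp, hm, ← neg_combo hz n, Ez_two, ← hx]
  have hd : (1 : ℂ) - -(x * a) = 1 + x * a := by ring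
  rw [hd, ← mul_add, add_comm ((-(x * a)) / (1 + x * a)), alg_odd ha h1 h2 h3]

lemma f_two_odd (k : ℝ) {z : ℂ} (hz : 0 < z.im) {u : ℕ+} (hu : Odd (u : ℕ)) :
    trm k (z - 1/4) (2 * u) + trm k (z + 1/4) (2 * u)
      = (2 : ℂ) ^ (-(k : ℂ)) * Wf k z u := by
  set y := Ez z (2 * u) with hy
  have hcoe : ((2 * u : ℕ+) : ℕ) = 2 * (u : ℕ) := by push_cast; ring
  have hIp : Complex.I ^ ((2 * u : ℕ+) : ℕ) = -1 := by
    rw [hcoe, pow_mul, Complex.I_sq, hu.neg_one_pow]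
  have hIm : (-Complex.I) ^ ((2 * u : ℕ+) : ℕ) = -1 := by
    rw [hcoe, pow_mul, neg_sq, Complex.I_sq, hu.neg_one_pow]
  have hp : Ez (z + 1/4) (2 * u) = -y := by rw [Ez_shift_plus, hIp]; ring
  have hm : Ez (z - 1/4) (2 * u) = -y := by rw [Ez_shift_minus, hIm]; ring
  have hsub : (1 : ℂ) - -y = 1 + y := by ring
  rw [trm, trm, Az, Az, hp, hm, hsub, g_two, Wf, mul_assoc]
  congr 1
  rw [← mul_add, ← neg_combo hz u, ← hy]
  congr 1
  field_simp
  ring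

lemma f_four (k : ℝ) {z : ℂ} (hz : 0 < z.im) (v : ℕ+) :
    trm k (z - 1/4) (2 * (2 * v)) + trm k (z + 1/4) (2 * (2 * v))
      = 2 * ((2 : ℂ) ^ (-(k : ℂ))) ^ 2 * (gg k v * Az z (4 * v)) := by
  have h4 : 2 * (2 * v) = (4 : ℕ+) * v := by
    apply PNat.coe_injective; push_cast; ring
  have hcoe : ((4 * v : ℕ+) : ℕ) = 4 * (v : ℕ) := by push_cast; ring
  have hIp : Complex.I ^ ((4 * v : ℕ+) : ℕ) = 1 := by
    rw [hcoe, pow_mul]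
    norm_num [Complex.I_pow_four]
  have hIm : (-Complex.I) ^ ((4 * v : ℕ+) : ℕ) = 1 := by
    rw [hcoe, pow_mul]
    have h : (-Complex.I) ^ 4 = 1 := by
      rw [show (4 : ℕ) = 2 * 2 by rfl, pow_mul, neg_sq, Complex.I_sq]; norm_num
    rw [h, one_pow]
  have hp : Ez (z + 1/4) (4 * v) = Ez z (4 * v) := by rw [Ez_shift_plus, hIp, mul_one]
  have hm : Ez (z - 1/4) (4 * v) = Ez z (4 * v) := by rw [Ez_shift_minus, hIm, mul_one]
  have hg4 : gg k (4 * v) = ((2 : ℂ) ^ (-(k : ℂ))) ^ 2 * gg k v := by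
    rw [← h4, g_two k (2 * v), g_two k v]; ring
  rw [h4, trm, trm, Az, Az, hp, hm, hg4]
  unfold Az
  ring

lemma Wf_two (k : ℝ) (z : ℂ) (v : ℕ+) :
    Wf k z (2 * v) = (2 : ℂ) ^ (-(k : ℂ)) * (gg k v * (4 * Az z (8 * v) - 2 * Az z (4 * v))) := by
  have h8 : (4 : ℕ+) * (2 * v) = 8 * v := by apply PNat.coe_injective; push_cast; ring
  have h4 : (2 : ℕ+) * (2 * v) = 4 * v := by apply PNat.coe_injective; push_cast; ring
  rw [Wf, h8, h4, g_two]
  ring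

lemma P_dmul (k : ℝ) (z : ℂ) (d : ℕ+) :
    P k (((d : ℕ) : ℂ) * z) = ∑' n : ℕ+, gg k n * Az z (d * n) := by
  rw [P_eq]
  apply tsum_congr
  intro n
  rw [trm]
  congr 1
  unfold Az Ez
  have h : 2 * (Real.pi : ℂ) * Complex.I * n * (((d : ℕ) : ℂ) * z)
      = 2 * (Real.pi : ℂ) * Complex.I * ((d * n : ℕ+) : ℂ) * z := by
    push_cast
    ring
  rw [h]

theorem quadrupling (k : ℝ) (z : ℂ) (hz : 0 < z.im) :
    P k (z - 1 / 4) + P k (z + 1 / 4) =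
      ((2 + (((2 : ℝ) ^ (1 - k) : ℝ) : ℂ)) ^ 2 - (((2 : ℝ) ^ (1 - k) : ℝ) : ℂ)) * P k (4 * z)
        - (2 + (((2 : ℝ) ^ (1 - k) : ℝ) : ℂ)) *
            (P k (2 * z) + (((2 : ℝ) ^ (1 - k) : ℝ) : ℂ) * P k (8 * z)) := by
  have hzp : 0 < (z + 1/4).im := by rw [(im_shift z).1]; exact hz
  have hzm : 0 < (z - 1/4).im := by rw [(im_shift z).2]; exact hz
  set t : ℂ := (2 : ℂ) ^ (-(k : ℂ)) with ht
  have hsm : Summable (trm k (z - 1/4)) := summable_term k hzm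
  have hsp : Summable (trm k (z + 1/4)) := summable_term k hzp
  have hfS : Summable (fun n : ℕ+ => trm k (z - 1/4) n + trm k (z + 1/4) n) := hsm.add hsp
  have hd : ∀ d : ℕ+, 0 < (((d : ℕ) : ℂ) * z).im := by
    intro d
    have h : (((d : ℕ) : ℂ) * z).im = (d : ℕ) * z.im := by simp
    rw [h]
    exact mul_pos (by exact_mod_cast d.pos) hz
  have hgA : ∀ d : ℕ+, Summable (fun n : ℕ+ => gg k n * Az z (d * n)) := by
    intro d
    apply (summable_term k (hd d)).congr
    intro n
    rw [trm]
    congr 1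
    unfold Az Ez
    have h : 2 * (Real.pi : ℂ) * Complex.I * n * (((d : ℕ) : ℂ) * z)
        = 2 * (Real.pi : ℂ) * Complex.I * ((d * n : ℕ+) : ℂ) * z := by
      push_cast; ring
    rw [h]
  have hW : Summable (Wf k z) := by
    apply (((hgA 4).mul_left 4).sub ((hgA 2).mul_left 2)).congr
    intro n
    rw [Wf]
    ring
  have h2c : (2 : ℂ) * z = (((2 : ℕ+) : ℕ) : ℂ) * z := by norm_num
  have h4c : (4 : ℂ) * z = (((4 : ℕ+) : ℕ) : ℂ) * z := by norm_num
  have h8c : (8 : ℂ) * z = (((8 : ℕ+) : ℕ) : ℂ) * z := by norm_num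
  set S : ℂ := ∑' n : ℕ+, (if Even (n : ℕ) then 0 else Wf k z n) with hS
  -- value of S
  have e8 : ∑' n : ℕ+, Wf k z n = 4 * P k (4 * z) - 2 * P k (2 * z) := by
    rw [h4c, h2c, P_dmul, P_dmul, ← tsum_mul_left, ← tsum_mul_left,
      ← Summable.tsum_sub ((hgA 4).mul_left 4) ((hgA 2).mul_left 2)]
    apply tsum_congr
    intro n
    rw [Wf]
    ring
  have e9 : ∑' v : ℕ+, Wf k z (2 * v) = t * (4 * P k (8 * z) - 2 * P k (4 * z)) := by
    rw [h8c, h4c, P_dmul, P_dmul, ← tsum_mul_left, ← tsum_mul_left,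
      ← Summable.tsum_sub ((hgA 8).mul_left 4) ((hgA 4).mul_left 2), ← tsum_mul_left]
    apply tsum_congr
    intro v
    rw [Wf_two]
    ring
  have e7 : ∑' n : ℕ+, Wf k z n = S + ∑' v : ℕ+, Wf k z (2 * v) := tsum_split _ hW
  have hSval : S = (4 * P k (4 * z) - 2 * P k (2 * z)) - t * (4 * P k (8 * z) - 2 * P k (4 * z)) := by
    linear_combination e8 - e7 - e9
  -- value of LHS
  have e3 : (∑' n : ℕ+, if Even (n : ℕ) then 0 else (trm k (z - 1/4) n + trm k (z + 1/4) n)) = S := by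
    rw [hS]
    apply tsum_congr
    intro n
    by_cases h : Even (n : ℕ)
    · simp [h]
    · simp only [if_neg h]
      exact f_odd k hz (Nat.not_even_iff_odd.mp h)
  have hf2 : Summable (fun u : ℕ+ => trm k (z - 1/4) (2 * u) + trm k (z + 1/4) (2 * u)) :=
    hfS.comp_injective two_mul_injective
  have e5 : (∑' u : ℕ+, if Even (u : ℕ) then 0 else (trm k (z - 1/4) (2 * u) + trm k (z + 1/4) (2 * u)))
      = t * S := by
    rw [hS, ← tsum_mul_left]
    apply tsum_congr
    intro u
    by_cases h : Even (u : ℕ)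
    · simp [h]
    · simp only [if_neg h]
      exact f_two_odd k hz (Nat.not_even_iff_odd.mp h)
  have e6 : ∑' v : ℕ+, (trm k (z - 1/4) (2 * (2 * v)) + trm k (z + 1/4) (2 * (2 * v)))
      = 2 * t ^ 2 * P k (4 * z) := by
    rw [h4c, P_dmul, ← tsum_mul_left]
    apply tsum_congr
    intro v
    exact f_four k hz v
  have main : P k (z - 1/4) + P k (z + 1/4) = S + (t * S + 2 * t ^ 2 * P k (4 * z)) := by
    rw [P_eq, P_eq, ← Summable.tsum_add hsm hsp, tsum_split _ hfS, e3,
      tsum_split _ hf2, e5, e6]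
  rw [show z - 1 / 4 = z - 1/4 by norm_num, show z + 1 / 4 = z + 1/4 by norm_num,
    main, c_eq k, ← ht, hSval]
  ring
end

section
/- For every real number k and every complex number z with Im z > 0, Σ_{r=−2}^{2} P_k(z + r/5) = (5 + 5^{1−k}) · P_k(5z) − 5^{1−k} · P_k(25z). -/
open Complex Finset

namespace Quint

noncomputable def F (k : ℝ) (w : ℂ) (p : ℕ+ × ℕ+) : ℂ :=
  (p.1 : ℂ) ^ (-(k : ℂ)) * Complex.exp (2 * Real.pi * Complex.I * p.1 * p.2 * w)

lemma norm_F (k : ℝ) (w : ℂ) (p : ℕ+ × ℕ+) :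
    ‖F k w p‖ = ((p.1 : ℝ) ^ (-k)) * Real.exp (-(2 * Real.pi * w.im) * (p.1 * p.2)) := by
  rw [F, norm_mul]
  congr 1
  · have hp : (0:ℝ) < (p.1 : ℝ) := by exact_mod_cast p.1.pos
    have : ((p.1 : ℕ+) : ℂ) = (((p.1 : ℕ) : ℝ) : ℂ) := by push_cast; ring
    rw [this, Complex.norm_cpow_eq_rpow_re_of_pos hp]
    norm_num
  · have h : (2 * (Real.pi:ℂ) * Complex.I * p.1 * p.2 * w)
        = ((2 * Real.pi * ((p.1 : ℝ) * (p.2 : ℝ)) : ℝ) : ℂ) * (Complex.I * w) := by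
      push_cast; ring
    rw [h, Complex.norm_exp, Complex.re_ofReal_mul]
    congr 1
    simp [Complex.mul_re]
    ring

end Quint

namespace Quint

lemma summable_norm_F (k : ℝ) {w : ℂ} (hw : 0 < w.im) :
    Summable fun p : ℕ+ × ℕ+ ↦ ‖F k w p‖ := by
  set t := w.im with ht
  set K : ℕ := ⌈-k⌉₊ with hK
  set r : ℝ := Real.exp (-(Real.pi * t)) with hr
  have hπt : 0 < Real.pi * t := mul_pos Real.pi_pos hw
  have hr0 : 0 < r := Real.exp_pos _
  have hr1 : r < 1 := by
    rw [hr, Real.exp_lt_one_iff]; linarith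
  have hgN : Summable fun n : ℕ ↦ (n : ℝ) ^ K * r ^ n :=
    summable_pow_mul_geometric_of_norm_lt_one K
      (by rwa [Real.norm_eq_abs, abs_of_pos hr0])
  have hg : Summable fun n : ℕ+ ↦ ((n : ℕ) : ℝ) ^ K * r ^ (n : ℕ) := by
    apply (Equiv.pnatEquivNat.symm.summable_iff
      (f := fun n : ℕ+ ↦ ((n : ℕ) : ℝ) ^ K * r ^ (n : ℕ))).mp
    refine (((summable_nat_add_iff 1).mpr hgN)).congr fun n ↦ ?_
    simp [Equiv.pnatEquivNat, Function.comp]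
  have hhN : Summable fun n : ℕ ↦ r ^ n := summable_geometric_of_lt_one hr0.le hr1
  have hh : Summable fun n : ℕ+ ↦ r ^ (n : ℕ) := by
    apply (Equiv.pnatEquivNat.symm.summable_iff (f := fun n : ℕ+ ↦ r ^ (n : ℕ))).mp
    refine (((summable_nat_add_iff 1).mpr hhN)).congr fun n ↦ ?_
    simp [Equiv.pnatEquivNat, Function.comp]
  have hprod := hg.mul_of_nonneg hh
    (fun n ↦ by positivity) (fun n ↦ by positivity)
  apply Summable.of_nonneg_of_le (fun p ↦ norm_nonneg _) _ hprod
  intro p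
  rw [norm_F]
  obtain ⟨n, m⟩ := p
  have hn1 : (1 : ℝ) ≤ (n : ℕ) := by exact_mod_cast n.one_le
  have hm1 : (1 : ℝ) ≤ (m : ℕ) := by exact_mod_cast m.one_le
  have h1 : ((n : ℕ) : ℝ) ^ (-k) ≤ ((n : ℕ) : ℝ) ^ K := by
    rw [← Real.rpow_natCast _ K]
    exact Real.rpow_le_rpow_of_exponent_le hn1 (Nat.le_ceil _)
  have h2 : Real.exp (-(2 * Real.pi * t) * ((n : ℕ) * (m : ℕ)))
      ≤ r ^ (n : ℕ) * r ^ (m : ℕ) := by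
    rw [hr, ← Real.exp_nat_mul, ← Real.exp_nat_mul, ← Real.exp_add, Real.exp_le_exp]
    have hnm1 : ((n:ℕ):ℝ) ≤ ((n:ℕ):ℝ) * ((m:ℕ):ℝ) := le_mul_of_one_le_right (by positivity) hm1
    have hnm2 : ((m:ℕ):ℝ) ≤ ((n:ℕ):ℝ) * ((m:ℕ):ℝ) := le_mul_of_one_le_left (by positivity) hn1
    nlinarith [mul_le_mul_of_nonneg_left (add_le_add hnm1 hnm2) hπt.le]
  have e1 : (0:ℝ) ≤ ((n : ℕ) : ℝ) ^ (-k) := Real.rpow_nonneg (by positivity) _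
  calc ((n : ℕ) : ℝ) ^ (-k) * Real.exp (-(2 * Real.pi * t) * ((n : ℕ) * (m : ℕ)))
      ≤ ((n : ℕ) : ℝ) ^ K * (r ^ (n : ℕ) * r ^ (m : ℕ)) := by
        apply mul_le_mul h1 h2 (Real.exp_pos _).le (by positivity)
    _ = ((n : ℕ) : ℝ) ^ K * r ^ (n : ℕ) * r ^ (m : ℕ) := by ring

lemma summable_F (k : ℝ) {w : ℂ} (hw : 0 < w.im) : Summable (F k w) :=
  (summable_norm_F k hw).of_norm

end Quint

namespace Quint

lemma geom (q : ℂ) (hq : ‖q‖ < 1) : q / (1 - q) = ∑' m : ℕ+, q ^ (m : ℕ) := by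
  have h1 : ∑' m : ℕ+, q ^ (m : ℕ) = ∑' j : ℕ, q ^ (j + 1) := by
    rw [← Equiv.pnatEquivNat.symm.tsum_eq (f := fun m : ℕ+ ↦ q ^ (m : ℕ))]
    refine tsum_congr fun j ↦ ?_
    simp [Equiv.pnatEquivNat]
  rw [h1]
  have h2 : ∀ j : ℕ, q ^ (j + 1) = q * q ^ j := fun j ↦ by ring
  simp_rw [h2]
  rw [tsum_mul_left, tsum_geometric_of_norm_lt_one hq, div_eq_mul_inv]

lemma re_exp (c : ℝ) (w : ℂ) : (2 * (Real.pi : ℂ) * Complex.I * (c : ℂ) * w).re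
    = -(2 * Real.pi * w.im) * c := by
  have h : (2 * (Real.pi : ℂ) * Complex.I * (c : ℂ) * w)
      = ((2 * Real.pi * c : ℝ) : ℂ) * (Complex.I * w) := by push_cast; ring
  rw [h, Complex.re_ofReal_mul]
  simp [Complex.mul_re]
  ring

lemma P_eq (k : ℝ) {w : ℂ} (hw : 0 < w.im) : P k w = ∑' p : ℕ+ × ℕ+, F k w p := by
  rw [Summable.tsum_prod (summable_F k hw), P]
  refine tsum_congr fun n ↦ ?_
  have hn1 : (1 : ℝ) ≤ (n : ℕ) := by exact_mod_cast n.one_le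
  have hq : ‖Complex.exp (2 * Real.pi * Complex.I * n * w)‖ < 1 := by
    have h : (2 * (Real.pi : ℂ) * Complex.I * (n : ℂ) * w)
        = (2 * (Real.pi : ℂ) * Complex.I * (((n : ℕ) : ℝ) : ℂ) * w) := by push_cast; ring
    rw [h, Complex.norm_exp, re_exp, Real.exp_lt_one_iff]
    nlinarith [mul_pos (mul_pos Real.pi_pos hw) (lt_of_lt_of_le zero_lt_one hn1)]
  rw [geom _ hq, ← tsum_mul_left]
  refine tsum_congr fun m ↦ ?_
  rw [F, ← Complex.exp_nat_mul]
  have h2 : ((m : ℕ) : ℂ) * (2 * (Real.pi : ℂ) * Complex.I * n * w)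
      = 2 * (Real.pi : ℂ) * Complex.I * n * m * w := by push_cast; ring
  rw [h2]

end Quint

namespace Quint

lemma rou (c : ℕ) :
    ∑ r ∈ Finset.Icc (-2 : ℤ) 2, Complex.exp (2 * Real.pi * Complex.I * c * r / 5)
      = if 5 ∣ c then 5 else 0 := by
  set u : ℂ := Complex.exp (2 * Real.pi * Complex.I * c / 5) with hu
  have hterm : ∀ r : ℤ, Complex.exp (2 * Real.pi * Complex.I * c * r / 5) = u ^ r := by
    intro r
    rw [hu, ← Complex.exp_int_mul]
    congr 1
    push_cast; ring
  simp_rw [hterm]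
  have hu0 : u ≠ 0 := Complex.exp_ne_zero _
  by_cases hdvd : 5 ∣ c
  · obtain ⟨d, rfl⟩ := hdvd
    have hu1 : u = 1 := by
      rw [hu, show (2 * (Real.pi:ℂ) * Complex.I * (5 * d : ℕ) / 5) = (d : ℂ) * (2 * Real.pi * Complex.I) by push_cast; ring]
      exact Complex.exp_nat_mul_two_pi_mul_I d
    simp [hu1]
  · have hu5 : u ^ (5 : ℕ) = 1 := by
      rw [hu, ← Complex.exp_nat_mul,
        show (5:ℕ) * (2 * (Real.pi:ℂ) * Complex.I * c / 5) = (c : ℂ) * (2 * Real.pi * Complex.I) by push_cast; ring]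
      exact Complex.exp_nat_mul_two_pi_mul_I c
    have hu1 : u ≠ 1 := by
      intro h
      rw [hu, Complex.exp_eq_one_iff] at h
      obtain ⟨n, hn⟩ := h
      have hπ : (Real.pi : ℂ) ≠ 0 := by exact_mod_cast Real.pi_ne_zero
      have hc : (c : ℂ) = 5 * n := by
        have h2 : (2 * (Real.pi : ℂ) * Complex.I) * (c : ℂ)
            = (2 * (Real.pi : ℂ) * Complex.I) * (5 * n) := by
          field_simp at hn
          linear_combination (2 * (Real.pi : ℂ) * Complex.I) * hn
        exact mul_left_cancel₀ (by simp [Complex.I_ne_zero, hπ]) h2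
      have hc' : (c : ℤ) = 5 * n := by exact_mod_cast hc
      have h5 : (5 : ℤ) ∣ (c : ℤ) := hc' ▸ dvd_mul_right 5 n
      exact hdvd (by exact_mod_cast h5)
    have husum : 1 + u + u ^ 2 + u ^ 3 + u ^ 4 = 0 := by
      have h0 : (u - 1) * (1 + u + u ^ 2 + u ^ 3 + u ^ 4) = 0 := by
        have : (u - 1) * (1 + u + u ^ 2 + u ^ 3 + u ^ 4) = u ^ 5 - 1 := by ring
        rw [this, hu5, sub_self]
      rcases mul_eq_zero.mp h0 with h | h
      · exact absurd (sub_eq_zero.mp h) hu1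
      · exact h
    have hIcc : Finset.Icc (-2 : ℤ) 2 = ({-2, -1, 0, 1, 2} : Finset ℤ) := by decide
    rw [if_neg hdvd, hIcc]
    rw [Finset.sum_insert (by decide), Finset.sum_insert (by decide),
      Finset.sum_insert (by decide), Finset.sum_insert (by decide), Finset.sum_singleton]
    have ep2 : u ^ (2 : ℤ) = u * u := by
      rw [show (2 : ℤ) = ((2 : ℕ) : ℤ) from rfl, zpow_natCast, pow_two]
    have e2 : u ^ (-2 : ℤ) = (u * u)⁻¹ := by rw [zpow_neg, ep2]
    have e1 : u ^ (-1 : ℤ) = u⁻¹ := by simp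
    rw [e2, e1, zpow_zero, zpow_one, ep2]
    field_simp
    linear_combination husum

end Quint

namespace Quint

lemma F_five_fst (k : ℝ) (w : ℂ) (p : ℕ+ × ℕ+) :
    F k w ((5 * p.1 : ℕ+), p.2) = ((5 : ℝ) : ℂ) ^ (-(k : ℂ)) * F k (5 * w) p := by
  rw [F, F]
  have h1 : (((5 * p.1 : ℕ+) : ℕ) : ℂ) = (((5 : ℝ) : ℂ)) * ((((p.1 : ℕ)) : ℝ) : ℂ) := by
    push_cast; ring
  have h2 : ((5 * p.1 : ℕ+) : ℂ) ^ (-(k : ℂ))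
      = ((5 : ℝ) : ℂ) ^ (-(k : ℂ)) * ((p.1 : ℕ) : ℂ) ^ (-(k : ℂ)) := by
    rw [show ((5 * p.1 : ℕ+) : ℂ) = (((5 * p.1 : ℕ+) : ℕ) : ℂ) from rfl, h1,
      Complex.mul_cpow_ofReal_nonneg (show (0:ℝ) ≤ 5 by norm_num)
        (show (0:ℝ) ≤ ((p.1 : ℕ) : ℝ) by positivity)]
    norm_cast
  rw [h2]
  have h3 : 2 * (Real.pi : ℂ) * Complex.I * ((5 * p.1 : ℕ+) : ℂ) * p.2 * w
      = 2 * (Real.pi : ℂ) * Complex.I * p.1 * p.2 * (5 * w) := by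
    push_cast; ring
  rw [h3]
  push_cast
  ring

lemma F_five_snd (k : ℝ) (w : ℂ) (p : ℕ+ × ℕ+) :
    F k w (p.1, (5 * p.2 : ℕ+)) = F k (5 * w) p := by
  rw [F, F]
  have h3 : 2 * (Real.pi : ℂ) * Complex.I * p.1 * ((5 * p.2 : ℕ+) : ℂ) * w
      = 2 * (Real.pi : ℂ) * Complex.I * p.1 * p.2 * (5 * w) := by
    push_cast; ring
  rw [h3]

lemma inj_fst : Function.Injective (fun p : ℕ+ × ℕ+ ↦ ((5 * p.1 : ℕ+), p.2)) := by
  intro p q h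
  simp only [Prod.mk.injEq] at h
  exact Prod.ext (mul_left_cancel h.1) h.2

lemma inj_snd : Function.Injective (fun p : ℕ+ × ℕ+ ↦ (p.1, (5 * p.2 : ℕ+))) := by
  intro p q h
  simp only [Prod.mk.injEq] at h
  exact Prod.ext h.1 (mul_left_cancel h.2)

lemma tsum_dvd_fst (k : ℝ) {w : ℂ} (hw : 0 < w.im) :
    ∑' p : ℕ+ × ℕ+, (if 5 ∣ (p.1 : ℕ) then F k w p else 0)
      = ((5 : ℝ) : ℂ) ^ (-(k : ℂ)) * ∑' p : ℕ+ × ℕ+, F k (5 * w) p := by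
  rw [← tsum_mul_left]
  rw [← Function.Injective.tsum_eq inj_fst
    (f := fun p : ℕ+ × ℕ+ ↦ (if 5 ∣ (p.1 : ℕ) then F k w p else 0)) ?_]
  · refine tsum_congr fun p ↦ ?_
    have hd : 5 ∣ (((5 * p.1 : ℕ+) : ℕ)) := by
      rw [PNat.mul_coe]; exact Dvd.intro _ rfl
    simp only [if_pos hd]
    exact F_five_fst k w p
  · intro p hp
    simp only [Function.mem_support, ne_eq] at hp
    have h5 : 5 ∣ (p.1 : ℕ) := by
      by_contra h
      simp [h] at hp
    obtain ⟨d, hd⟩ := h5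
    have hd0 : 0 < d := by
      rcases Nat.eq_zero_or_pos d with h | h
      · exfalso; have := p.1.pos; omega
      · exact h
    set d' : ℕ+ := ⟨d, hd0⟩ with hd'
    refine ⟨(d', p.2), ?_⟩
    have h9 : 5 * d' = p.1 := by
      apply PNat.coe_injective
      rw [PNat.mul_coe]
      exact hd.symm
    simp only []
    rw [h9]

end Quint

namespace Quint

lemma summable_ind (k : ℝ) {w : ℂ} (hw : 0 < w.im) (c : ℕ+ × ℕ+ → Prop) [DecidablePred c] :
    Summable fun p : ℕ+ × ℕ+ ↦ if c p then F k w p else 0 := by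
  apply Summable.of_norm_bounded (summable_norm_F k hw)
  intro p
  by_cases h : c p <;> simp [h]

lemma im_five {w : ℂ} (hw : 0 < w.im) : 0 < ((5 : ℂ) * w).im := by
  simp [Complex.mul_im]
  linarith

lemma tsum_snd (k : ℝ) {w : ℂ} (hw : 0 < w.im) :
    ∑' p : ℕ+ × ℕ+, (if ¬ 5 ∣ (p.1 : ℕ) ∧ 5 ∣ (p.2 : ℕ) then F k w p else 0)
      = ∑' p : ℕ+ × ℕ+, F k (5 * w) p
        - ((5 : ℝ) : ℂ) ^ (-(k : ℂ)) * ∑' p : ℕ+ × ℕ+, F k (25 * w) p := by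
  classical
  have h5w : 0 < ((5 : ℂ) * w).im := im_five hw
  have hstep : ∑' p : ℕ+ × ℕ+, (if ¬ 5 ∣ (p.1 : ℕ) ∧ 5 ∣ (p.2 : ℕ) then F k w p else 0)
      = ∑' p : ℕ+ × ℕ+, (if ¬ 5 ∣ (p.1 : ℕ) then F k (5 * w) p else 0) := by
    rw [← Function.Injective.tsum_eq inj_snd
      (f := fun p : ℕ+ × ℕ+ ↦ (if ¬ 5 ∣ (p.1 : ℕ) ∧ 5 ∣ (p.2 : ℕ) then F k w p else 0)) ?_]
    · refine tsum_congr fun p ↦ ?_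
      by_cases h : 5 ∣ (p.1 : ℕ)
      · simp [h]
      · have hc : ¬ 5 ∣ (p.1 : ℕ) ∧ 5 ∣ (((5 * p.2 : ℕ+)) : ℕ) :=
          ⟨h, by rw [PNat.mul_coe]; exact Dvd.intro _ rfl⟩
        rw [if_pos hc, if_pos h]
        exact F_five_snd k w p
    · intro p hp
      simp only [Function.mem_support, ne_eq] at hp
      have h5 : ¬ 5 ∣ (p.1 : ℕ) ∧ 5 ∣ (p.2 : ℕ) := by
        by_contra h
        simp [if_neg h] at hp
      obtain ⟨d, hd⟩ := h5.2
      have hd0 : 0 < d := by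
        rcases Nat.eq_zero_or_pos d with h | h
        · exfalso; have := p.2.pos; omega
        · exact h
      set d' : ℕ+ := ⟨d, hd0⟩ with hd'
      refine ⟨(p.1, d'), ?_⟩
      have h9 : 5 * d' = p.2 := by
        apply PNat.coe_injective
        rw [PNat.mul_coe]
        exact hd.symm
      simp only []
      rw [h9]
  rw [hstep]
  have hsplit : ∀ p : ℕ+ × ℕ+, (if ¬ 5 ∣ (p.1 : ℕ) then F k (5 * w) p else 0)
      = F k (5 * w) p - (if 5 ∣ (p.1 : ℕ) then F k (5 * w) p else 0) := by
    intro p; by_cases h : 5 ∣ (p.1 : ℕ) <;> simp [h]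
  rw [tsum_congr hsplit,
    Summable.tsum_sub (summable_F k h5w) (summable_ind k h5w _),
    tsum_dvd_fst k h5w, show (5 : ℂ) * (5 * w) = 25 * w by ring]

end Quint

open Quint in
theorem quintupling (k : ℝ) (z : ℂ) (hz : 0 < z.im) :
    ∑ r ∈ Finset.Icc (-2 : ℤ) 2, P k (z + (r : ℂ) / 5) =
      (5 + (((5 : ℝ) ^ (1 - k) : ℝ) : ℂ)) * P k (5 * z)
        - (((5 : ℝ) ^ (1 - k) : ℝ) : ℂ) * P k (25 * z) := by
  classical
  have h5z : 0 < ((5 : ℂ) * z).im := im_five hz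
  have h25z : 0 < ((25 : ℂ) * z).im := by
    have := im_five h5z
    rwa [show (5 : ℂ) * (5 * z) = 25 * z by ring] at this
  have hrim : ∀ r : ℤ, 0 < (z + (r : ℂ) / 5).im := by
    intro r
    have : ((r : ℂ) / 5).im = 0 := by
      rw [show ((r : ℂ) / 5) = (((r / 5 : ℝ)) : ℂ) by push_cast; ring]
      exact Complex.ofReal_im _
    rw [Complex.add_im, this, add_zero]
    exact hz
  have hL : ∑ r ∈ Finset.Icc (-2 : ℤ) 2, P k (z + (r : ℂ) / 5)
      = ∑' p : ℕ+ × ℕ+, ∑ r ∈ Finset.Icc (-2 : ℤ) 2, F k (z + (r : ℂ) / 5) p := by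
    rw [Finset.sum_congr rfl (fun r _ ↦ P_eq k (hrim r))]
    exact (Summable.tsum_finsetSum (fun r _ ↦ summable_F k (hrim r))).symm
  have hpt : ∀ p : ℕ+ × ℕ+, ∑ r ∈ Finset.Icc (-2 : ℤ) 2, F k (z + (r : ℂ) / 5) p
      = 5 * ((if 5 ∣ (p.1 : ℕ) then F k z p else 0)
           + (if ¬ 5 ∣ (p.1 : ℕ) ∧ 5 ∣ (p.2 : ℕ) then F k z p else 0)) := by
    intro p
    have h1 : ∀ r : ℤ, F k (z + (r : ℂ) / 5) p
        = F k z p * Complex.exp (2 * Real.pi * Complex.I * (((p.1 * p.2 : ℕ+)) : ℕ) * r / 5) := by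
      intro r
      rw [F, F, show Complex.exp (2 * (Real.pi : ℂ) * Complex.I * p.1 * p.2 * (z + (r : ℂ) / 5))
          = Complex.exp (2 * Real.pi * Complex.I * p.1 * p.2 * z)
            * Complex.exp (2 * Real.pi * Complex.I * (((p.1 * p.2 : ℕ+)) : ℕ) * r / 5) from by
        rw [← Complex.exp_add]; congr 1; push_cast; ring]
      ring
    simp_rw [h1]
    rw [← Finset.mul_sum, rou (((p.1 * p.2 : ℕ+)) : ℕ)]
    have hnm : 5 ∣ (((p.1 * p.2 : ℕ+)) : ℕ) ↔ 5 ∣ (p.1 : ℕ) ∨ 5 ∣ (p.2 : ℕ) := by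
      rw [PNat.mul_coe]
      exact Nat.Prime.dvd_mul (by norm_num)
    by_cases ha : 5 ∣ (p.1 : ℕ) <;> by_cases hb : 5 ∣ (p.2 : ℕ) <;>
      simp [PNat.mul_coe, Nat.Prime.dvd_mul (by norm_num : Nat.Prime 5), ha, hb] <;> ring
  rw [hL, tsum_congr hpt, tsum_mul_left,
    Summable.tsum_add (summable_ind k hz _) (summable_ind k hz _),
    tsum_dvd_fst k hz, tsum_snd k hz,
    P_eq k h5z, P_eq k h25z]
  have hc : (((5 : ℝ) ^ (1 - k) : ℝ) : ℂ) = 5 * ((5 : ℝ) : ℂ) ^ (-(k : ℂ)) := by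
    rw [Complex.ofReal_cpow (by norm_num : (0:ℝ) ≤ 5),
      show ((1 - k : ℝ) : ℂ) = 1 + (-(k : ℂ)) by push_cast; ring,
      Complex.cpow_add _ _ (by norm_num : ((5 : ℝ) : ℂ) ≠ 0), Complex.cpow_one]
    norm_num
  rw [hc]
  ring
end

section
/- For every real number k and every complex number z with Im z > 0, Σ_{r=−3}^{3} P_k(z + r/7) = (7 + 7^{1−k}) · P_k(7z) − 7^{1−k} · P_k(49z). -/
open Complex Real Finset

noncomputable abbrev qq (t : ℂ) : ℂ := Complex.exp (2 * Real.pi * Complex.I * t)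

lemma norm_qq_lt {t : ℂ} (ht : 0 < t.im) : ‖qq t‖ < 1 := by
  have : (2 * (Real.pi:ℂ) * Complex.I * t).re = -(2 * Real.pi * t.im) := by
    simp [Complex.mul_re, Complex.mul_im]
  rw [show ‖qq t‖ = Real.exp ((2 * (Real.pi:ℂ) * Complex.I * t).re) from Complex.norm_exp _, this,
    Real.exp_lt_one_iff]
  nlinarith [Real.pi_pos]

lemma frac_eq_tsum {w : ℂ} (hw : ‖w‖ < 1) : w / (1 - w) = ∑' m : ℕ, w ^ (m + 1) := by
  have hs := tsum_geometric_of_norm_lt_one hw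
  have : ∑' m : ℕ, w ^ (m + 1) = w * ∑' m : ℕ, w ^ m := by
    rw [← tsum_mul_left]
    exact tsum_congr fun m => by ring
  rw [this, hs, div_eq_mul_inv]

lemma summable_shift {w : ℂ} (hw : ‖w‖ < 1) : Summable (fun m : ℕ => w ^ (m + 1)) := by
  have := (summable_geometric_of_norm_lt_one hw).mul_left w
  refine this.congr fun m => by ring

lemma pow7_eq_one_iff {c : ℂ} (h7 : c ^ 7 = 1) (h1 : c ≠ 1) (j : ℕ) : c ^ j = 1 ↔ 7 ∣ j := by
  have ho : orderOf c = 7 := by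
    have hdvd : orderOf c ∣ 7 := orderOf_dvd_of_pow_eq_one h7
    rcases ((by norm_num : Nat.Prime 7)).eq_one_or_self_of_dvd _ hdvd with h | h
    · exact absurd (orderOf_eq_one_iff.mp h) h1
    · exact h
  rw [← ho]
  exact orderOf_dvd_iff_pow_eq_one.symm

lemma charsum {v : ℂ} (h7 : v ^ 7 = 1) :
    ∑ r ∈ Finset.Icc (-3 : ℤ) 3, v ^ r = if v = 1 then 7 else 0 := by
  have hv0 : v ≠ 0 := by
    intro h; rw [h] at h7; norm_num at h7
  have hIcc : Finset.Icc (-3 : ℤ) 3 = {-3, -2, -1, 0, 1, 2, 3} := by decide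
  rw [hIcc]
  split_ifs with h1
  · subst h1; norm_num
  · have key : 1 + v + v ^ 2 + v ^ 3 + v ^ 4 + v ^ 5 + v ^ 6 = 0 := by
      have h2 : (v - 1) * (1 + v + v ^ 2 + v ^ 3 + v ^ 4 + v ^ 5 + v ^ 6) = 0 := by
        linear_combination h7
      exact (mul_eq_zero.mp h2).resolve_left (sub_ne_zero.mpr h1)
    have hinv : v⁻¹ = v ^ 6 := inv_eq_of_mul_eq_one_right (by linear_combination h7)
    norm_num [Finset.sum_insert, zpow_neg, zpow_ofNat, inv_pow, hinv]
    rw [show ((v:ℂ)^3)⁻¹ = (v⁻¹)^3 from (inv_pow v 3).symm,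
      show ((v:ℂ)^2)⁻¹ = (v⁻¹)^2 from (inv_pow v 2).symm, hinv]
    linear_combination key + (v^4*(v^7+1)+v^5)*h7

lemma norm_c_one {c : ℂ} (h7 : c ^ 7 = 1) : ‖c‖ = 1 := by
  have : ‖c‖ ^ 7 = 1 := by rw [← norm_pow, h7, norm_one]
  nlinarith [norm_nonneg c, sq_nonneg (‖c‖ - 1), sq_nonneg (‖c‖ + 1), sq_nonneg (‖c‖^2 - 1),
    sq_nonneg (‖c‖^3 - 1), sq_nonneg (‖c‖^3 + 1)]

lemma sum_frac {w c : ℂ} (hw : ‖w‖ < 1) (h7 : c ^ 7 = 1) (h1 : c ≠ 1) :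
    ∑ r ∈ Finset.Icc (-3 : ℤ) 3, (w * c ^ r) / (1 - w * c ^ r) = 7 * (w ^ 7 / (1 - w ^ 7)) := by
  have hc0 : c ≠ 0 := fun h => by rw [h] at h7; norm_num at h7
  have hnc : ∀ r : ℤ, ‖w * c ^ r‖ < 1 := by
    intro r
    rw [norm_mul, norm_zpow, norm_c_one h7, one_zpow, mul_one]
    exact hw
  -- expand each fraction as a geometric series
  have step1 : ∑ r ∈ Finset.Icc (-3 : ℤ) 3, (w * c ^ r) / (1 - w * c ^ r)
      = ∑' m : ℕ, ∑ r ∈ Finset.Icc (-3 : ℤ) 3, (w * c ^ r) ^ (m + 1) := by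
    rw [Summable.tsum_finsetSum (fun r _ => summable_shift (hnc r))]
    exact Finset.sum_congr rfl fun r _ => frac_eq_tsum (hnc r)
  rw [step1]
  have step2 : ∀ m : ℕ, ∑ r ∈ Finset.Icc (-3 : ℤ) 3, (w * c ^ r) ^ (m + 1)
      = if 7 ∣ (m + 1) then 7 * w ^ (m + 1) else 0 := by
    intro m
    have hrw : ∀ r : ℤ, (w * c ^ r) ^ (m + 1) = w ^ (m + 1) * (c ^ (m + 1)) ^ r := by
      intro r
      rw [mul_pow]
      congr 1
      rw [← zpow_natCast (c ^ r), ← zpow_mul, ← zpow_natCast c (m+1), ← zpow_mul, mul_comm]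
    simp_rw [hrw, ← Finset.mul_sum]
    rw [charsum (by rw [← pow_mul, mul_comm, pow_mul, h7, one_pow])]
    simp only [pow7_eq_one_iff h7 h1]
    split_ifs with h <;> ring
  rw [tsum_congr step2]
  -- reindex over multiples of 7
  have step3 : ∑' m : ℕ, (if 7 ∣ (m + 1) then 7 * w ^ (m + 1) else 0)
      = ∑' j : ℕ, 7 * (w ^ 7) ^ (j + 1) := by
    rw [← Function.Injective.tsum_eq (g := fun j : ℕ => 7 * j + 6)
      (f := fun m => if 7 ∣ (m + 1) then 7 * w ^ (m + 1) else 0)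
      (by intro a b h; simp only at h; omega)]
    · refine tsum_congr fun j => ?_
      rw [if_pos ⟨j + 1, by ring⟩, ← pow_mul]
      ring_nf
    · intro m hm
      simp only [Function.mem_support, ne_eq] at hm
      have hd : 7 ∣ (m + 1) := by by_contra hd; exact hm (if_neg hd)
      obtain ⟨t, ht⟩ := hd
      exact ⟨t - 1, by simp only; omega⟩
  rw [step3, tsum_mul_left, ← frac_eq_tsum (by rw [norm_pow]; exact pow_lt_one₀ (norm_nonneg w) hw (by norm_num))]

lemma norm_qnz {y : ℂ} (hy : 0 < y.im) (n : ℕ+) :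
    ‖Complex.exp (2 * Real.pi * Complex.I * n * y)‖ = Real.exp (-(2 * Real.pi * y.im)) ^ (n:ℕ) := by
  rw [Complex.norm_exp, ← Real.exp_nat_mul]
  congr 1
  have : (2 * (Real.pi:ℂ) * Complex.I * n * y) = 2 * (Real.pi:ℂ) * Complex.I * ((n:ℂ) * y) := by ring
  rw [this]
  simp [Complex.mul_re, Complex.mul_im]
  ring

lemma summable_P (k : ℝ) {y : ℂ} (hy : 0 < y.im) :
    Summable (fun n : ℕ+ => (n : ℂ) ^ (-(k : ℂ)) *
      (Complex.exp (2 * Real.pi * Complex.I * n * y) /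
        (1 - Complex.exp (2 * Real.pi * Complex.I * n * y)))) := by
  set ρ : ℝ := Real.exp (-(2 * Real.pi * y.im)) with hρdef
  have hρ0 : 0 < ρ := Real.exp_pos _
  have hρ1 : ρ < 1 := by
    rw [hρdef, Real.exp_lt_one_iff]
    nlinarith [Real.pi_pos]
  set K : ℕ := ⌈|k|⌉₊ with hK
  have hbound : ∀ n : ℕ+, ‖(n : ℂ) ^ (-(k : ℂ)) *
      (Complex.exp (2 * Real.pi * Complex.I * n * y) /
        (1 - Complex.exp (2 * Real.pi * Complex.I * n * y)))‖
      ≤ ((n:ℕ) : ℝ) ^ K * ρ ^ (n:ℕ) * (1 - ρ)⁻¹ := by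
    intro n
    have hq : ‖Complex.exp (2 * Real.pi * Complex.I * n * y)‖ = ρ ^ (n:ℕ) := norm_qnz hy n
    have hρn : ρ ^ (n:ℕ) ≤ ρ := by
      calc ρ ^ (n:ℕ) ≤ ρ ^ 1 := pow_le_pow_of_le_one (le_of_lt hρ0) (le_of_lt hρ1) n.one_le
        _ = ρ := pow_one ρ
    have hden : 1 - ρ ≤ ‖1 - Complex.exp (2 * Real.pi * Complex.I * n * y)‖ := by
      calc 1 - ρ ≤ 1 - ρ ^ (n:ℕ) := by linarith
        _ ≤ ‖(1:ℂ)‖ - ‖Complex.exp (2 * Real.pi * Complex.I * n * y)‖ := by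
            rw [norm_one, hq]
        _ ≤ ‖1 - Complex.exp (2 * Real.pi * Complex.I * n * y)‖ := by
            exact norm_sub_norm_le _ _
    have hcpow : ‖(n : ℂ) ^ (-(k : ℂ))‖ = ((n:ℕ):ℝ) ^ (-k) := by
      rw [show ((n:ℕ+):ℂ) = (((n:ℕ):ℝ):ℂ) by push_cast; ring]
      rw [Complex.norm_cpow_eq_rpow_re_of_pos (by exact_mod_cast n.pos)]
      norm_num
    have hpow : ((n:ℕ):ℝ) ^ (-k) ≤ ((n:ℕ):ℝ) ^ K := by
      have h1n : (1:ℝ) ≤ ((n:ℕ):ℝ) := by exact_mod_cast n.one_le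
      calc ((n:ℕ):ℝ) ^ (-k) ≤ ((n:ℕ):ℝ) ^ (K:ℝ) := by
            apply Real.rpow_le_rpow_of_exponent_le h1n
            calc -k ≤ |k| := neg_le_abs k
              _ ≤ K := Nat.le_ceil _
        _ = ((n:ℕ):ℝ) ^ K := by rw [Real.rpow_natCast]
    rw [norm_mul, norm_div, hq, hcpow]
    have hfrac : ρ ^ (n:ℕ) / ‖1 - Complex.exp (2 * Real.pi * Complex.I * n * y)‖ ≤ ρ ^ (n:ℕ) * (1 - ρ)⁻¹ := by
      rw [div_eq_mul_inv]
      apply mul_le_mul_of_nonneg_left _ (le_of_lt (pow_pos hρ0 _))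
      apply inv_anti₀ (by linarith) hden
    calc ((n:ℕ):ℝ) ^ (-k) * (ρ ^ (n:ℕ) / ‖1 - Complex.exp (2 * Real.pi * Complex.I * n * y)‖)
        ≤ ((n:ℕ):ℝ) ^ K * (ρ ^ (n:ℕ) * (1 - ρ)⁻¹) := by
          apply mul_le_mul hpow hfrac (by positivity) (by positivity)
      _ = ((n:ℕ):ℝ) ^ K * ρ ^ (n:ℕ) * (1 - ρ)⁻¹ := by ring
  apply Summable.of_norm_bounded _ hbound
  have hN : Summable (fun m : ℕ => ((m:ℝ)) ^ K * ρ ^ m * (1 - ρ)⁻¹) := by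
    apply Summable.mul_right
    exact summable_pow_mul_geometric_of_norm_lt_one (R := ℝ) K
      (by rw [Real.norm_eq_abs, abs_of_pos hρ0]; exact hρ1)
  exact hN.comp_injective (fun a b h => by exact_mod_cast PNat.coe_injective (by exact_mod_cast h))

lemma tsum_pnat_mul7 (f : ℕ+ → ℂ) :
    (∑' n : ℕ+, if (7:ℕ) ∣ (n:ℕ) then f n else 0) = ∑' n : ℕ+, f (7 * n) := by
  rw [← Function.Injective.tsum_eq (g := fun n : ℕ+ => 7 * n)
    (f := fun n : ℕ+ => if (7:ℕ) ∣ (n:ℕ) then f n else 0)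
    (fun a b h => by
      have : (7:ℕ) * a = 7 * b := by exact_mod_cast congrArg (PNat.val) h
      exact PNat.coe_injective (by omega))]
  · refine tsum_congr fun n => ?_
    rw [if_pos ⟨(n:ℕ), by push_cast; ring⟩]
  · intro n hn
    simp only [Function.mem_support, ne_eq] at hn
    have hd : (7:ℕ) ∣ (n:ℕ) := by by_contra hd; exact hn (if_neg hd)
    obtain ⟨t, ht⟩ := hd
    have ht0 : 0 < t := by
      rcases Nat.eq_zero_or_pos t with h | h
      · exfalso; have := n.pos; omega
      · exact h
    exact ⟨⟨t, ht0⟩, PNat.coe_injective (by rw [ht]; rfl)⟩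



theorem septupling (k : ℝ) (z : ℂ) (hz : 0 < z.im) :
    ∑ r ∈ Finset.Icc (-3 : ℤ) 3, P k (z + (r : ℂ) / 7) =
      (7 + (((7 : ℝ) ^ (1 - k) : ℝ) : ℂ)) * P k (7 * z)
        - (((7 : ℝ) ^ (1 - k) : ℝ) : ℂ) * P k (49 * z) := by
  classical
  set F : ℂ → ℕ+ → ℂ := fun y n =>
    Complex.exp (2 * Real.pi * Complex.I * n * y) /
      (1 - Complex.exp (2 * Real.pi * Complex.I * n * y)) with hF
  have h7z : 0 < ((7:ℂ) * z).im := by simp [Complex.mul_im]; linarith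
  have h49z : 0 < ((49:ℂ) * z).im := by simp [Complex.mul_im]; linarith
  have hzr : ∀ r : ℤ, 0 < (z + (r:ℂ)/7).im := by
    intro r
    have : ((r:ℂ)/7).im = 0 := by
      rw [show ((r:ℂ)/7) = (((r:ℝ)/7 : ℝ) : ℂ) by push_cast; ring]
      exact Complex.ofReal_im _
    simp [Complex.add_im, this, hz]
  -- key per-n computation
  have key : ∀ n : ℕ+, ∑ r ∈ Finset.Icc (-3:ℤ) 3, F (z + (r:ℂ)/7) n
      = if (7:ℕ) ∣ (n:ℕ) then 7 * F z n else 7 * F ((7:ℂ)*z) n := by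
    intro n
    set w : ℂ := Complex.exp (2 * Real.pi * Complex.I * n * z) with hw
    set c : ℂ := Complex.exp (2 * Real.pi * Complex.I * n / 7) with hc
    have hexp : ∀ r : ℤ, Complex.exp (2 * Real.pi * Complex.I * n * (z + (r:ℂ)/7)) = w * c ^ r := by
      intro r
      rw [hw, hc, ← Complex.exp_int_mul, ← Complex.exp_add]
      congr 1
      push_cast
      ring
    have hc7 : c ^ 7 = 1 := by
      rw [hc, ← Complex.exp_nat_mul]
      rw [show (7:ℕ) * (2 * (Real.pi:ℂ) * Complex.I * n / 7) = (n:ℤ) * (2 * Real.pi * Complex.I) by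
        push_cast; ring]
      exact Complex.exp_int_mul_two_pi_mul_I _
    have hwn : ‖w‖ < 1 := by
      rw [hw, show 2 * (Real.pi:ℂ) * Complex.I * n * z = 2 * Real.pi * Complex.I * ((n:ℂ) * z) by ring]
      apply norm_qq_lt
      simp [Complex.mul_im]
      positivity
    have hw7 : w ^ 7 = Complex.exp (2 * Real.pi * Complex.I * n * ((7:ℂ)*z)) := by
      rw [hw, ← Complex.exp_nat_mul]
      congr 1
      push_cast
      ring
    by_cases hdvd : (7:ℕ) ∣ (n:ℕ)
    · -- c = 1
      obtain ⟨t, ht⟩ := hdvd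
      have hc1 : c = 1 := by
        rw [hc, show 2 * (Real.pi:ℂ) * Complex.I * n / 7 = (t:ℤ) * (2 * Real.pi * Complex.I) by
          push_cast [ht]; ring]
        exact Complex.exp_int_mul_two_pi_mul_I _
      rw [if_pos ⟨t, ht⟩]
      have : ∀ r ∈ Finset.Icc (-3:ℤ) 3, F (z + (r:ℂ)/7) n = F z n := by
        intro r _
        rw [hF]
        simp only
        rw [hexp r, hc1, one_zpow, mul_one]
      rw [Finset.sum_congr rfl this, Finset.sum_const,
        show (Finset.Icc (-3:ℤ) 3).card = 7 from by decide, nsmul_eq_mul]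
      norm_num
    · -- c ≠ 1
      have hc1 : c ≠ 1 := by
        intro hceq
        rw [hc, Complex.exp_eq_one_iff] at hceq
        obtain ⟨t, ht⟩ := hceq
        have : (n:ℂ) = 7 * t := by
          field_simp at ht
          have h2 : (2:ℂ) * Real.pi * Complex.I ≠ 0 := by
            simp [Real.pi_ne_zero, Complex.I_ne_zero, Complex.ofReal_ne_zero]
          -- ht : 2 * π * I * n = t * (2 * π * I) * 7  (roughly)
          apply mul_left_cancel₀ h2
          linear_combination (2 * (Real.pi:ℂ) * Complex.I) * ht
        have : ((n:ℕ):ℤ) = 7 * t := by exact_mod_cast this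
        exact hdvd ⟨t.toNat, by omega⟩
      rw [if_neg hdvd]
      have : ∀ r ∈ Finset.Icc (-3:ℤ) 3, F (z + (r:ℂ)/7) n = (w * c ^ r) / (1 - w * c ^ r) := by
        intro r _
        rw [hF]
        simp only
        rw [hexp r]
      rw [Finset.sum_congr rfl this, sum_frac hwn hc7 hc1, hF]
      simp only
      rw [hw7]
  -- split the sum
  set g1 : ℕ+ → ℂ := fun n => 7 * ((n:ℂ) ^ (-(k:ℂ)) * F ((7:ℂ)*z) n) with hg1
  set g2 : ℕ+ → ℂ := fun n =>
    if (7:ℕ) ∣ (n:ℕ) then 7 * ((n:ℂ) ^ (-(k:ℂ)) * (F z n - F ((7:ℂ)*z) n)) else 0 with hg2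
  have hsplit : ∀ n : ℕ+, (n:ℂ) ^ (-(k:ℂ)) *
      (if (7:ℕ) ∣ (n:ℕ) then 7 * F z n else 7 * F ((7:ℂ)*z) n) = g1 n + g2 n := by
    intro n
    rw [hg1, hg2]
    simp only
    split_ifs with h <;> ring
  have hs1 : Summable g1 := by
    apply Summable.mul_left
    exact summable_P k h7z
  have hsF : ∀ (y : ℂ), 0 < y.im → Summable (fun n : ℕ+ => (n:ℂ) ^ (-(k:ℂ)) * F y n) := by
    intro y hy
    exact summable_P k hy
  have hG : Summable (fun n : ℕ+ => (n:ℂ) ^ (-(k:ℂ)) *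
      (if (7:ℕ) ∣ (n:ℕ) then 7 * F z n else 7 * F ((7:ℂ)*z) n)) := by
    have h0 : Summable (fun n : ℕ+ => ∑ r ∈ Finset.Icc (-3:ℤ) 3,
        (n:ℂ) ^ (-(k:ℂ)) * F (z + (r:ℂ)/7) n) :=
      summable_sum (fun r _ => hsF _ (hzr r))
    refine h0.congr fun n => ?_
    rw [← Finset.mul_sum, key n]
  have hs2 : Summable g2 := by
    refine (hG.sub hs1).congr fun n => ?_
    rw [hsplit n]
    ring
  -- compute the left-hand side
  have hLHS : ∑ r ∈ Finset.Icc (-3:ℤ) 3, P k (z + (r:ℂ)/7) = (∑' n : ℕ+, g1 n) + ∑' n : ℕ+, g2 n := by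
    calc ∑ r ∈ Finset.Icc (-3:ℤ) 3, P k (z + (r:ℂ)/7)
        = ∑ r ∈ Finset.Icc (-3:ℤ) 3, ∑' n : ℕ+, (n:ℂ) ^ (-(k:ℂ)) * F (z + (r:ℂ)/7) n := rfl
      _ = ∑' n : ℕ+, ∑ r ∈ Finset.Icc (-3:ℤ) 3, (n:ℂ) ^ (-(k:ℂ)) * F (z + (r:ℂ)/7) n :=
          (Summable.tsum_finsetSum fun r _ => hsF _ (hzr r)).symm
      _ = ∑' n : ℕ+, (n:ℂ) ^ (-(k:ℂ)) *
            (if (7:ℕ) ∣ (n:ℕ) then 7 * F z n else 7 * F ((7:ℂ)*z) n) :=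
          tsum_congr fun n => by rw [← Finset.mul_sum, key n]
      _ = ∑' n : ℕ+, (g1 n + g2 n) := tsum_congr fun n => hsplit n
      _ = (∑' n : ℕ+, g1 n) + ∑' n : ℕ+, g2 n := Summable.tsum_add hs1 hs2
  have hT1 : ∑' n : ℕ+, g1 n = 7 * P k ((7:ℂ) * z) := by
    rw [hg1, tsum_mul_left]
    rfl
  -- reindex the second sum
  have hterm : ∀ n : ℕ+, 7 * (((7*n : ℕ+):ℂ) ^ (-(k:ℂ)) * (F z (7*n) - F ((7:ℂ)*z) (7*n)))
      = (7 * (7:ℂ) ^ (-(k:ℂ))) * ((n:ℂ) ^ (-(k:ℂ)) * F ((7:ℂ)*z) n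
          - (n:ℂ) ^ (-(k:ℂ)) * F ((49:ℂ)*z) n) := by
    intro n
    have e1 : F z (7*n) = F ((7:ℂ)*z) n := by
      rw [hF]
      simp only
      rw [show 2 * (Real.pi:ℂ) * Complex.I * ((7*n : ℕ+):ℂ) * z
        = 2 * Real.pi * Complex.I * (n:ℂ) * ((7:ℂ)*z) by push_cast [PNat.mul_coe]; ring]
    have e2 : F ((7:ℂ)*z) (7*n) = F ((49:ℂ)*z) n := by
      rw [hF]
      simp only
      rw [show 2 * (Real.pi:ℂ) * Complex.I * ((7*n : ℕ+):ℂ) * ((7:ℂ)*z)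
        = 2 * Real.pi * Complex.I * (n:ℂ) * ((49:ℂ)*z) by push_cast [PNat.mul_coe]; ring]
    have e3 : ((7*n : ℕ+):ℂ) ^ (-(k:ℂ)) = (7:ℂ) ^ (-(k:ℂ)) * (n:ℂ) ^ (-(k:ℂ)) := by
      rw [show ((7*n : ℕ+):ℂ) = (((7:ℝ)):ℂ) * ((((n:ℕ):ℝ)):ℂ) by push_cast [PNat.mul_coe]; ring]
      rw [Complex.mul_cpow_ofReal_nonneg (by norm_num) (by positivity)]
      norm_num
    rw [e1, e2, e3]
    ring
  have hT2 : ∑' n : ℕ+, g2 n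
      = (7 * (7:ℂ) ^ (-(k:ℂ))) * (P k ((7:ℂ) * z) - P k ((49:ℂ) * z)) := by
    rw [hg2]
    rw [tsum_pnat_mul7 (fun n => 7 * ((n:ℂ) ^ (-(k:ℂ)) * (F z n - F ((7:ℂ)*z) n)))]
    rw [tsum_congr hterm, tsum_mul_left]
    congr 1
    rw [Summable.tsum_sub (summable_P k h7z) (summable_P k h49z)]
    rfl
  -- finish
  have hA : (((7:ℝ) ^ (1 - k) : ℝ) : ℂ) = 7 * (7:ℂ) ^ (-(k:ℂ)) := by
    rw [show (1 - k) = 1 + (-k) by ring, Real.rpow_add (by norm_num), Real.rpow_one,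
      Complex.ofReal_mul, Complex.ofReal_cpow (by norm_num : (0:ℝ) ≤ 7)]
    push_cast
    ring
  rw [hLHS, hT1, hT2, hA]
  ring
end
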